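/- arXiv:2404.02694 — 4 statements merged into one kernel-verified Lean document; each statement's English description precedes it below -/
import Mathlib

section
/- The outer angular spectrum of dimension s satisfies: {θ_s^{inf,liminf}, θ_s^{inf,limsup}, θ_s^{sup,liminf}, θ_s^{sup,limsup}} ⊆ Σ_s ⊆ [θ_s^{inf,liminf}, θ_s^{sup,limsup}]. -/
open scoped RealInnerProductSpace ENNReal
open Filter

noncomputable section

/-- `d`-dimensional Euclidean space `ℝ^d`. -/
abbrev Euc (d : ℕ) := EuclideanSpace ℝ (Fin d)

/-- Bounded linear operators on `ℝ^d` (i.e. `d × d` matrices, with the operator norm). -/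
abbrev Op (d : ℕ) := Euc d →L[ℝ] Euc d

/-- The maximal principal angle between two subspaces of `ℝ^d`,
`∠(V,W) = arccos( min_{v ∈ V, ‖v‖=1} max_{w ∈ W, ‖w‖=1} vᵀw )`. -/
def subAngle {d : ℕ} (V W : Submodule ℝ (Euc d)) : ℝ :=
  Real.arccos (sInf {x : ℝ | ∃ v ∈ V, ‖v‖ = 1 ∧
    x = sSup {y : ℝ | ∃ w ∈ W, ‖w‖ = 1 ∧ y = ⟪v, w⟫}})

/-- The solution operator `Φ(n,0) = A_{n-1} ⋯ A_0` of the system `u_{n+1} = A_n u_n`. -/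
def PhiN {d : ℕ} (A : ℕ → Euc d ≃L[ℝ] Euc d) : ℕ → Euc d ≃L[ℝ] Euc d
  | 0 => ContinuousLinearEquiv.refl ℝ (Euc d)
  | n + 1 => (PhiN A n).trans (A n)

/-- The average of principal angles between successive subspaces,
`α_n(V) = (1/n) Σ_{j=1}^n ∠(Φ(j-1,0)V, Φ(j,0)V)`. -/
def alphaAvg {d : ℕ} (A : ℕ → Euc d ≃L[ℝ] Euc d)
    (V : Submodule ℝ (Euc d)) (n : ℕ) : ℝ :=
  (n : ℝ)⁻¹ * ∑ j ∈ Finset.range n,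
    subAngle (V.map ((PhiN A j : Op d) : Euc d →ₗ[ℝ] Euc d))
      (V.map ((PhiN A (j + 1) : Op d) : Euc d →ₗ[ℝ] Euc d))

/-- Outer angular value `θ_s^{sup,limsup} = sup_{V ∈ G(s,d)} limsup_n α_n(V)`. -/
def thSupLimsup {d : ℕ} (A : ℕ → Euc d ≃L[ℝ] Euc d) (s : ℕ) : ℝ :=
  sSup {x : ℝ | ∃ V : Submodule ℝ (Euc d), Module.finrank ℝ V = s ∧
    x = limsup (alphaAvg A V) atTop}

/-- Outer angular value `θ_s^{sup,liminf} = sup_{V ∈ G(s,d)} liminf_n α_n(V)`. -/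
def thSupLiminf {d : ℕ} (A : ℕ → Euc d ≃L[ℝ] Euc d) (s : ℕ) : ℝ :=
  sSup {x : ℝ | ∃ V : Submodule ℝ (Euc d), Module.finrank ℝ V = s ∧
    x = liminf (alphaAvg A V) atTop}

/-- Outer angular value `θ_s^{inf,limsup} = inf_{V ∈ G(s,d)} limsup_n α_n(V)`. -/
def thInfLimsup {d : ℕ} (A : ℕ → Euc d ≃L[ℝ] Euc d) (s : ℕ) : ℝ :=
  sInf {x : ℝ | ∃ V : Submodule ℝ (Euc d), Module.finrank ℝ V = s ∧
    x = limsup (alphaAvg A V) atTop}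

/-- Outer angular value `θ_s^{inf,liminf} = inf_{V ∈ G(s,d)} liminf_n α_n(V)`. -/
def thInfLiminf {d : ℕ} (A : ℕ → Euc d ≃L[ℝ] Euc d) (s : ℕ) : ℝ :=
  sInf {x : ℝ | ∃ V : Submodule ℝ (Euc d), Module.finrank ℝ V = s ∧
    x = liminf (alphaAvg A V) atTop}

/-- The outer angular spectrum of dimension `s`:
`Σ_s = cl{θ ∈ [0,π/2] : ∃ V ∈ G(s,d), liminf α_n(V) ≤ θ ≤ limsup α_n(V)}`. -/
def angSpecN {d : ℕ} (A : ℕ → Euc d ≃L[ℝ] Euc d) (s : ℕ) : Set ℝ :=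
  closure {θ : ℝ | 0 ≤ θ ∧ θ ≤ Real.pi / 2 ∧
    ∃ V : Submodule ℝ (Euc d), Module.finrank ℝ V = s ∧
      liminf (alphaAvg A V) atTop ≤ θ ∧ θ ≤ limsup (alphaAvg A V) atTop}

lemma my_exists_unit {d : ℕ} {V : Submodule ℝ (Euc d)} (h : V ≠ ⊥) :
    ∃ v ∈ V, ‖v‖ = 1 := by
  obtain ⟨x, hx, hx0⟩ := Submodule.exists_mem_ne_zero_of_ne_bot h
  refine ⟨‖x‖⁻¹ • x, V.smul_mem _ hx, ?_⟩
  rw [norm_smul, norm_inv, norm_norm, inv_mul_cancel₀ (norm_ne_zero_iff.2 hx0)]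

lemma my_map_ne_bot {d : ℕ} (e : Euc d ≃L[ℝ] Euc d) {V : Submodule ℝ (Euc d)} (h : V ≠ ⊥) :
    V.map ((e : Op d) : Euc d →ₗ[ℝ] Euc d) ≠ ⊥ := by
  obtain ⟨x, hx, hx0⟩ := Submodule.exists_mem_ne_zero_of_ne_bot h
  intro hb
  have hmem : e x ∈ V.map ((e : Op d) : Euc d →ₗ[ℝ] Euc d) := ⟨x, hx, rfl⟩
  rw [hb, Submodule.mem_bot] at hmem
  exact hx0 (e.map_eq_zero_iff.mp hmem)

-- exists submodule of finrank s

lemma my_exists_submod (d s : ℕ) (hsd : s ≤ d) :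
    ∃ V : Submodule ℝ (Euc d), Module.finrank ℝ V = s := by
  have hd : Module.finrank ℝ (Euc d) = d := finrank_euclideanSpace_fin
  have hsd' : s ≤ Module.finrank ℝ (Euc d) := by omega
  let b := Module.finBasis ℝ (Euc d)
  refine ⟨Submodule.span ℝ (Set.range (⇑b ∘ Fin.castLE hsd')), ?_⟩
  rw [finrank_span_eq_card (b.linearIndependent.comp _ (Fin.castLE_injective hsd'))]
  simp

lemma my_subAngle_bounds {d : ℕ} {V W : Submodule ℝ (Euc d)} (hV : V ≠ ⊥) (hW : W ≠ ⊥) :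
    0 ≤ subAngle V W ∧ subAngle V W ≤ Real.pi / 2 := by
  obtain ⟨v₀, hv₀, hv₀n⟩ := my_exists_unit hV
  obtain ⟨w₀, hw₀, hw₀n⟩ := my_exists_unit hW
  set T := {x : ℝ | ∃ v ∈ V, ‖v‖ = 1 ∧
    x = sSup {y : ℝ | ∃ w ∈ W, ‖w‖ = 1 ∧ y = ⟪v, w⟫}} with hT
  have hmem : ∀ x ∈ T, 0 ≤ x := by
    rintro x ⟨v, hv, hvn, rfl⟩
    have hne : {y : ℝ | ∃ w ∈ W, ‖w‖ = 1 ∧ y = ⟪v, w⟫}.Nonempty := ⟨_, w₀, hw₀, hw₀n, rfl⟩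
    have hbdd : BddAbove {y : ℝ | ∃ w ∈ W, ‖w‖ = 1 ∧ y = ⟪v, w⟫} := by
      refine ⟨1, ?_⟩
      rintro y ⟨w, hw, hwn, rfl⟩
      calc ⟪v, w⟫ ≤ ‖v‖ * ‖w‖ := real_inner_le_norm v w
      _ = 1 := by rw [hvn, hwn, one_mul]
    have h1 : ⟪v, w₀⟫ ≤ sSup _ := le_csSup hbdd ⟨w₀, hw₀, hw₀n, rfl⟩
    have h2 : -⟪v, w₀⟫ ≤ sSup _ := le_csSup hbdd ⟨-w₀, W.neg_mem hw₀, by simpa using hw₀n,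
      by rw [inner_neg_right]⟩
    rcases le_or_gt 0 ⟪v, w₀⟫ with h | h
    · exact h.trans h1
    · exact (by linarith : (0:ℝ) ≤ -⟪v, w₀⟫).trans h2
  have hTne : T.Nonempty := ⟨_, v₀, hv₀, hv₀n, rfl⟩
  have h0 : 0 ≤ sInf T := le_csInf hTne hmem
  constructor
  · exact Real.arccos_nonneg _
  · exact Real.arccos_le_pi_div_two.2 h0

lemma my_alpha_bounds {d : ℕ} (A : ℕ → Euc d ≃L[ℝ] Euc d) {V : Submodule ℝ (Euc d)}
    (hV : V ≠ ⊥) (n : ℕ) : 0 ≤ alphaAvg A V n ∧ alphaAvg A V n ≤ Real.pi / 2 := by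
  have hterm : ∀ j : ℕ, 0 ≤ subAngle (V.map ((PhiN A j : Op d) : Euc d →ₗ[ℝ] Euc d)) (V.map ((PhiN A (j + 1) : Op d) : Euc d →ₗ[ℝ] Euc d)) ∧
      subAngle (V.map ((PhiN A j : Op d) : Euc d →ₗ[ℝ] Euc d)) (V.map ((PhiN A (j + 1) : Op d) : Euc d →ₗ[ℝ] Euc d)) ≤ Real.pi / 2 :=
    fun j => my_subAngle_bounds (my_map_ne_bot _ hV) (my_map_ne_bot _ hV)
  unfold alphaAvg
  rcases Nat.eq_zero_or_pos n with rfl | hn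
  · simp
    positivity
  constructor
  · exact mul_nonneg (by positivity) (Finset.sum_nonneg fun j _ => (hterm j).1)
  · have hsum : ∑ j ∈ Finset.range n,
        subAngle (V.map ((PhiN A j : Op d) : Euc d →ₗ[ℝ] Euc d)) (V.map ((PhiN A (j + 1) : Op d) : Euc d →ₗ[ℝ] Euc d))
        ≤ n * (Real.pi / 2) := by
      calc _ ≤ ∑ _j ∈ Finset.range n, (Real.pi / 2) :=
            Finset.sum_le_sum fun j _ => (hterm j).2
      _ = n * (Real.pi / 2) := by simp [mul_comm]
    calc (n : ℝ)⁻¹ * _ ≤ (n : ℝ)⁻¹ * (n * (Real.pi / 2)) :=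
          mul_le_mul_of_nonneg_left hsum (by positivity)
    _ = Real.pi / 2 := by
          field_simp

lemma my_lim_bounds {f : ℕ → ℝ} (h0 : ∀ n, 0 ≤ f n) (h1 : ∀ n, f n ≤ Real.pi / 2) :
    0 ≤ liminf f atTop ∧ liminf f atTop ≤ limsup f atTop ∧ limsup f atTop ≤ Real.pi / 2 := by
  have hb1 : IsBoundedUnder (· ≤ ·) atTop f := isBoundedUnder_of ⟨_, h1⟩
  have hb2 : IsBoundedUnder (· ≥ ·) atTop f := isBoundedUnder_of ⟨_, h0⟩
  exact ⟨le_liminf_of_le hb1.isCoboundedUnder_ge (Eventually.of_forall h0),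
    liminf_le_limsup hb1 hb2,
    limsup_le_of_le hb2.isCoboundedUnder_le (Eventually.of_forall h1)⟩

/-- the outer angular spectrum satisfies
`{θ_s^{inf,liminf}, θ_s^{inf,limsup}, θ_s^{sup,liminf}, θ_s^{sup,limsup}} ⊆ Σ_s
⊆ [θ_s^{inf,liminf}, θ_s^{sup,limsup}]`. -/
theorem statement2 {d s : ℕ} (A : ℕ → Euc d ≃L[ℝ] Euc d)
    (hbd : ∃ M : ℝ, ∀ n : ℕ, ‖(A n : Op d)‖ ≤ M ∧ ‖((A n).symm : Op d)‖ ≤ M)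
    (hs : 1 ≤ s) (hsd : s ≤ d) :
    ({thInfLiminf A s, thInfLimsup A s, thSupLiminf A s, thSupLimsup A s} : Set ℝ)
        ⊆ angSpecN A s ∧
    angSpecN A s ⊆ Set.Icc (thInfLiminf A s) (thSupLimsup A s) := by
  classical
  set Tli := {x : ℝ | ∃ V : Submodule ℝ (Euc d), Module.finrank ℝ V = s ∧
    x = liminf (alphaAvg A V) atTop} with hTli
  set Tls := {x : ℝ | ∃ V : Submodule ℝ (Euc d), Module.finrank ℝ V = s ∧
    x = limsup (alphaAvg A V) atTop} with hTls
  set S := {θ : ℝ | 0 ≤ θ ∧ θ ≤ Real.pi / 2 ∧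
    ∃ V : Submodule ℝ (Euc d), Module.finrank ℝ V = s ∧
      liminf (alphaAvg A V) atTop ≤ θ ∧ θ ≤ limsup (alphaAvg A V) atTop} with hS
  have hVne : ∀ V : Submodule ℝ (Euc d), Module.finrank ℝ V = s → V ≠ ⊥ := by
    intro V hV hbot
    rw [hbot] at hV
    rw [finrank_bot] at hV
    omega
  have hkey : ∀ V : Submodule ℝ (Euc d), Module.finrank ℝ V = s →
      0 ≤ liminf (alphaAvg A V) atTop ∧
      liminf (alphaAvg A V) atTop ≤ limsup (alphaAvg A V) atTop ∧
      limsup (alphaAvg A V) atTop ≤ Real.pi / 2 := fun V hV =>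
    my_lim_bounds (fun n => (my_alpha_bounds A (hVne V hV) n).1)
      (fun n => (my_alpha_bounds A (hVne V hV) n).2)
  have hli_sub : Tli ⊆ S := by
    rintro x ⟨V, hV, rfl⟩
    obtain ⟨a, b, c⟩ := hkey V hV
    exact ⟨a, b.trans c, V, hV, le_refl _, b⟩
  have hls_sub : Tls ⊆ S := by
    rintro x ⟨V, hV, rfl⟩
    obtain ⟨a, b, c⟩ := hkey V hV
    exact ⟨a.trans b, c, V, hV, b, le_refl _⟩
  obtain ⟨V₀, hV₀⟩ := my_exists_submod d s hsd
  have hline : Tli.Nonempty := ⟨_, V₀, hV₀, rfl⟩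
  have hlsne : Tls.Nonempty := ⟨_, V₀, hV₀, rfl⟩
  have hliBB : BddBelow Tli := ⟨0, fun x hx => (hli_sub hx).1⟩
  have hliBA : BddAbove Tli := ⟨Real.pi / 2, fun x hx => (hli_sub hx).2.1⟩
  have hlsBB : BddBelow Tls := ⟨0, fun x hx => (hls_sub hx).1⟩
  have hlsBA : BddAbove Tls := ⟨Real.pi / 2, fun x hx => (hls_sub hx).2.1⟩
  have hAng : angSpecN A s = closure S := rfl
  constructor
  · intro θ hθ
    rw [hAng]
    simp only [Set.mem_insert_iff, Set.mem_singleton_iff] at hθ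
    rcases hθ with rfl | rfl | rfl | rfl
    · exact closure_mono hli_sub (csInf_mem_closure hline hliBB)
    · exact closure_mono hls_sub (csInf_mem_closure hlsne hlsBB)
    · exact closure_mono hli_sub (csSup_mem_closure hline hliBA)
    · exact closure_mono hls_sub (csSup_mem_closure hlsne hlsBA)
  · rw [hAng]
    refine closure_minimal ?_ isClosed_Icc
    rintro θ ⟨h0, h2, V, hV, hle, hge⟩
    exact ⟨le_trans (csInf_le hliBB ⟨V, hV, rfl⟩) hle,
      le_trans hge (le_csSup hlsBA ⟨V, hV, rfl⟩)⟩
end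
end

section
/- Let the systems u_{n+1} = A_n u_n and v_{n+1} = Ã_n v_n be kinematically similar via transformations Q_n ∈ GL(ℝ^d), i.e. Ã_n = Q_{n+1} A_n Q_n^{-1}. Then the outer angular spectra of dimension s of the two systems coincide, Σ_s(Φ) = Σ_s(Φ̃), in each of the following two cases: (i) Q_n = q_n I with scalars q_n ≠ 0 for all n ∈ ℕ₀; (ii) the limit Q = lim_{n→∞} Q_n exists and is an orthogonal matrix. Moreover, in these cases the four outer angular values of the two systems agree as well. -/
open scoped RealInnerProductSpace ENNReal
open Filter

noncomputable section

namespace St6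

variable {d : ℕ}

def innSup (v : Euc d) (W : Submodule ℝ (Euc d)) : ℝ :=
  sSup {y : ℝ | ∃ w ∈ W, ‖w‖ = 1 ∧ y = ⟪v, w⟫}

def cosVW (V W : Submodule ℝ (Euc d)) : ℝ :=
  sInf {x : ℝ | ∃ v ∈ V, ‖v‖ = 1 ∧ x = innSup v W}

lemma subAngle_eq (V W : Submodule ℝ (Euc d)) :
    subAngle V W = Real.arccos (cosVW V W) := rfl

/-- nontrivial submodules have unit vectors -/
lemma exists_unit {W : Submodule ℝ (Euc d)} (h : 1 ≤ Module.finrank ℝ W) :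
    ∃ w ∈ W, ‖w‖ = 1 := by
  have hbot : W ≠ ⊥ := by
    intro hb
    rw [hb, finrank_bot] at h
    omega
  obtain ⟨x, hx, hx0⟩ := Submodule.exists_mem_ne_zero_of_ne_bot hbot
  refine ⟨‖x‖⁻¹ • x, W.smul_mem _ hx, ?_⟩
  rw [norm_smul, norm_inv, norm_norm, inv_mul_cancel₀ (norm_ne_zero_iff.2 hx0)]

lemma bddAbove_inn (v : Euc d) (W : Submodule ℝ (Euc d)) :
    BddAbove {y : ℝ | ∃ w ∈ W, ‖w‖ = 1 ∧ y = ⟪v, w⟫} := by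
  refine ⟨‖v‖, ?_⟩
  rintro y ⟨w, hw, h1, rfl⟩
  calc ⟪v, w⟫ ≤ ‖v‖ * ‖w‖ := real_inner_le_norm v w
    _ = ‖v‖ := by rw [h1, mul_one]

lemma le_innSup {v w : Euc d} {W : Submodule ℝ (Euc d)} (hw : w ∈ W) (h1 : ‖w‖ = 1) :
    ⟪v, w⟫ ≤ innSup v W :=
  le_csSup (bddAbove_inn v W) ⟨w, hw, h1, rfl⟩

lemma innSup_le_norm {W : Submodule ℝ (Euc d)} (hW : ∃ w ∈ W, ‖w‖ = 1) (v : Euc d) :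
    innSup v W ≤ ‖v‖ := by
  obtain ⟨w₀, hw₀, h₀⟩ := hW
  refine csSup_le ⟨_, ⟨w₀, hw₀, h₀, rfl⟩⟩ ?_
  rintro y ⟨w, hw, h1, rfl⟩
  calc ⟪v, w⟫ ≤ ‖v‖ * ‖w‖ := real_inner_le_norm v w
    _ = ‖v‖ := by rw [h1, mul_one]

lemma neg_norm_le_innSup {W : Submodule ℝ (Euc d)} (hW : ∃ w ∈ W, ‖w‖ = 1) (v : Euc d) :
    -‖v‖ ≤ innSup v W := by
  obtain ⟨w₀, hw₀, h₀⟩ := hW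
  refine le_trans ?_ (le_innSup hw₀ h₀)
  have := abs_real_inner_le_norm v w₀
  rw [h₀, mul_one] at this
  linarith [neg_abs_le (⟪v, w₀⟫ : ℝ)]

lemma innSup_lipschitz {W : Submodule ℝ (Euc d)} (hW : ∃ w ∈ W, ‖w‖ = 1) (v v' : Euc d) :
    innSup v W ≤ innSup v' W + ‖v - v'‖ := by
  obtain ⟨w₀, hw₀, h₀⟩ := hW
  refine csSup_le ⟨_, ⟨w₀, hw₀, h₀, rfl⟩⟩ ?_
  rintro y ⟨w, hw, h1, rfl⟩
  have h2 : ⟪v, w⟫ = ⟪v', w⟫ + ⟪v - v', w⟫ := by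
    rw [inner_sub_left]; ring
  have h3 : ⟪v - v', w⟫ ≤ ‖v - v'‖ := by
    calc ⟪v - v', w⟫ ≤ ‖v - v'‖ * ‖w‖ := real_inner_le_norm _ _
      _ = ‖v - v'‖ := by rw [h1, mul_one]
  have h4 := le_innSup (v := v') hw h1
  linarith

lemma innSup_transfer {W W' : Submodule ℝ (Euc d)} {δ : ℝ}
    (hW : ∃ w ∈ W, ‖w‖ = 1)
    (h : ∀ w ∈ W, ‖w‖ = 1 → ∃ w' ∈ W', ‖w'‖ = 1 ∧ ‖w - w'‖ ≤ δ)
    {v : Euc d} (hv : ‖v‖ = 1) :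
    innSup v W ≤ innSup v W' + δ := by
  obtain ⟨w₀, hw₀, h₀⟩ := hW
  refine csSup_le ⟨_, ⟨w₀, hw₀, h₀, rfl⟩⟩ ?_
  rintro y ⟨w, hw, h1, rfl⟩
  obtain ⟨w', hw', h1', hd⟩ := h w hw h1
  have h2 : ⟪v, w⟫ = ⟪v, w'⟫ + ⟪v, w - w'⟫ := by
    rw [inner_sub_right]; ring
  have h3 : ⟪v, w - w'⟫ ≤ δ := by
    calc ⟪v, w - w'⟫ ≤ ‖v‖ * ‖w - w'‖ := real_inner_le_norm _ _
      _ = ‖w - w'‖ := by rw [hv, one_mul]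
      _ ≤ δ := hd
  have h4 := le_innSup (v := v) hw' h1'
  linarith

lemma bddBelow_cos {V W : Submodule ℝ (Euc d)} (hW : ∃ w ∈ W, ‖w‖ = 1) :
    BddBelow {x : ℝ | ∃ v ∈ V, ‖v‖ = 1 ∧ x = innSup v W} := by
  refine ⟨-1, ?_⟩
  rintro x ⟨v, hv, h1, rfl⟩
  have := neg_norm_le_innSup hW v
  rw [h1] at this; exact this

lemma cosVW_le {V W : Submodule ℝ (Euc d)} (hW : ∃ w ∈ W, ‖w‖ = 1)
    {v : Euc d} (hv : v ∈ V) (h1 : ‖v‖ = 1) :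
    cosVW V W ≤ innSup v W :=
  csInf_le (bddBelow_cos hW) ⟨v, hv, h1, rfl⟩

lemma le_cosVW {V W : Submodule ℝ (Euc d)} (hV : ∃ v ∈ V, ‖v‖ = 1) {a : ℝ}
    (h : ∀ v ∈ V, ‖v‖ = 1 → a ≤ innSup v W) :
    a ≤ cosVW V W := by
  obtain ⟨v₀, hv₀, h₀⟩ := hV
  refine le_csInf ⟨_, ⟨v₀, hv₀, h₀, rfl⟩⟩ ?_
  rintro x ⟨v, hv, h1, rfl⟩
  exact h v hv h1

lemma cosVW_mem_Icc {V W : Submodule ℝ (Euc d)} (hV : ∃ v ∈ V, ‖v‖ = 1)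
    (hW : ∃ w ∈ W, ‖w‖ = 1) : cosVW V W ∈ Set.Icc (-1 : ℝ) 1 := by
  constructor
  · refine le_cosVW hV fun v hv h1 => ?_
    have := neg_norm_le_innSup hW v
    rw [h1] at this; exact this
  · obtain ⟨v₀, hv₀, h₀⟩ := hV
    refine le_trans (cosVW_le hW hv₀ h₀) ?_
    have := innSup_le_norm hW v₀
    rw [h₀] at this; exact this

lemma cos_compare {V W V₁ W₁ : Submodule ℝ (Euc d)} {δ : ℝ}
    (hV : ∃ v ∈ V, ‖v‖ = 1) (hW : ∃ w ∈ W, ‖w‖ = 1) (hW₁ : ∃ w ∈ W₁, ‖w‖ = 1)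
    (hVf : ∀ v ∈ V, ‖v‖ = 1 → ∃ v₁ ∈ V₁, ‖v₁‖ = 1 ∧ ‖v₁ - v‖ ≤ δ)
    (hWb : ∀ w₁ ∈ W₁, ‖w₁‖ = 1 → ∃ w ∈ W, ‖w‖ = 1 ∧ ‖w₁ - w‖ ≤ δ) :
    cosVW V₁ W₁ ≤ cosVW V W + 2 * δ := by
  have key : cosVW V₁ W₁ - 2 * δ ≤ cosVW V W := by
    refine le_cosVW hV fun v hv h1 => ?_
    obtain ⟨v₁, hv₁, h1₁, hd⟩ := hVf v hv h1
    have s1 : cosVW V₁ W₁ ≤ innSup v₁ W₁ := cosVW_le hW₁ hv₁ h1₁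
    have s2 : innSup v₁ W₁ ≤ innSup v W₁ + ‖v₁ - v‖ := innSup_lipschitz hW₁ v₁ v
    have s3 : innSup v W₁ ≤ innSup v W + δ := innSup_transfer hW₁ hWb h1
    linarith
  linarith



variable {d : ℕ}

lemma map_symm_cancel (R : Euc d ≃L[ℝ] Euc d) (V : Submodule ℝ (Euc d)) :
    (V.map ((R : Op d) : Euc d →ₗ[ℝ] Euc d)).map (((R.symm : Euc d ≃L[ℝ] Euc d) : Op d) : Euc d →ₗ[ℝ] Euc d) = V := by
  ext x
  simp only [Submodule.mem_map]
  constructor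
  · rintro ⟨y, ⟨z, hz, rfl⟩, rfl⟩
    simpa using hz
  · intro hx
    exact ⟨R x, ⟨x, hx, rfl⟩, by simp⟩

lemma approx_unit {δ : ℝ} (R : Euc d ≃L[ℝ] Euc d) (hR : ‖(R : Op d) - 1‖ ≤ δ)
    (hδ : δ ≤ 1/2) {V : Submodule ℝ (Euc d)} {v : Euc d} (hv : v ∈ V) (h1 : ‖v‖ = 1) :
    ∃ v₁ ∈ V.map ((R : Op d) : Euc d →ₗ[ℝ] Euc d), ‖v₁‖ = 1 ∧ ‖v₁ - v‖ ≤ 2 * δ := by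
  have hδ0 : 0 ≤ δ := le_trans (norm_nonneg _) hR
  set u : Euc d := R v with hu
  have huv : ‖u - v‖ ≤ δ := by
    have h2 : u - v = ((R : Op d) - 1) v := by
      simp [hu, ContinuousLinearMap.sub_apply]
    rw [h2]
    calc ‖((R : Op d) - 1) v‖ ≤ ‖(R : Op d) - 1‖ * ‖v‖ := ContinuousLinearMap.le_opNorm _ _
      _ ≤ δ := by rw [h1, mul_one]; exact hR
  have hun : 1 - δ ≤ ‖u‖ := by
    have := abs_norm_sub_norm_le u v
    rw [h1] at this
    have := abs_le.mp (this.trans huv)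
    linarith [this.1]
  have hupos : (0 : ℝ) < ‖u‖ := by linarith
  have hune : ‖u‖ ≠ 0 := ne_of_gt hupos
  refine ⟨‖u‖⁻¹ • u, Submodule.smul_mem _ _ (Submodule.mem_map_of_mem hv), ?_, ?_⟩
  · rw [norm_smul, norm_inv, norm_norm, inv_mul_cancel₀ hune]
  · have step1 : ‖(‖u‖⁻¹ • u) - u‖ = |1 - ‖u‖| := by
      have : (‖u‖⁻¹ • u) - u = (‖u‖⁻¹ - 1) • u := by
        rw [sub_smul, one_smul]
      rw [this, norm_smul, Real.norm_eq_abs]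
      rw [show (‖u‖⁻¹ - 1) = (1 - ‖u‖) * ‖u‖⁻¹ by field_simp]
      rw [abs_mul, abs_of_pos (inv_pos.2 hupos)]
      field_simp
    have step2 : |1 - ‖u‖| ≤ δ := by
      have := abs_norm_sub_norm_le v u
      rw [h1, norm_sub_rev] at this
      exact this.trans huv
    calc ‖(‖u‖⁻¹ • u) - v‖ ≤ ‖(‖u‖⁻¹ • u) - u‖ + ‖u - v‖ := norm_sub_le_norm_sub_add_norm_sub _ _ _
      _ ≤ δ + δ := by rw [step1]; exact add_le_add step2 huv
      _ = 2 * δ := by ring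

lemma symm_bound {δ : ℝ} (R : Euc d ≃L[ℝ] Euc d) (hR : ‖(R : Op d) - 1‖ ≤ δ)
    (hδ : δ ≤ 1/2) :
    ‖((R.symm : Euc d ≃L[ℝ] Euc d) : Op d) - 1‖ ≤ 2 * δ := by
  have hδ0 : 0 ≤ δ := le_trans (norm_nonneg _) hR
  refine ContinuousLinearMap.opNorm_le_bound _ (by linarith) fun y => ?_
  set x : Euc d := R.symm y with hx
  have hRx : R x = y := by simp [hx]
  have happ : (((R.symm : Euc d ≃L[ℝ] Euc d) : Op d) - 1) y = x - y := by
    simp [ContinuousLinearMap.sub_apply, hx]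
  have hxy : x - y = -(((R : Op d) - 1) x) := by
    simp [ContinuousLinearMap.sub_apply, hRx]
  have h1 : ‖x - y‖ ≤ δ * ‖x‖ := by
    rw [hxy, norm_neg]
    calc ‖((R : Op d) - 1) x‖ ≤ ‖(R : Op d) - 1‖ * ‖x‖ := ContinuousLinearMap.le_opNorm _ _
      _ ≤ δ * ‖x‖ := mul_le_mul_of_nonneg_right hR (norm_nonneg _)
  have h2 : ‖x‖ ≤ 2 * ‖y‖ := by
    have h3 : ‖x‖ - ‖y‖ ≤ ‖x - y‖ := by
      have := abs_norm_sub_norm_le x y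
      linarith [abs_le.mp this]
    nlinarith [norm_nonneg x]
  rw [happ]
  calc ‖x - y‖ ≤ δ * ‖x‖ := h1
    _ ≤ δ * (2 * ‖y‖) := mul_le_mul_of_nonneg_left h2 hδ0
    _ = 2 * δ * ‖y‖ := by ring

lemma arccos_mod {ε : ℝ} (hε : 0 < ε) : ∃ δ > 0, ∀ a b : ℝ,
    a ∈ Set.Icc (-1 : ℝ) 1 → b ∈ Set.Icc (-1 : ℝ) 1 → |a - b| ≤ δ →
    |Real.arccos a - Real.arccos b| ≤ ε := by
  have hc : UniformContinuousOn Real.arccos (Set.Icc (-1 : ℝ) 1) :=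
    IsCompact.uniformContinuousOn_of_continuous isCompact_Icc
      Real.continuous_arccos.continuousOn
  rw [Metric.uniformContinuousOn_iff] at hc
  obtain ⟨δ, hδ, h⟩ := hc ε hε
  refine ⟨δ/2, half_pos hδ, fun a b ha hb hab => ?_⟩
  have := h a ha b hb (by rw [Real.dist_eq]; linarith)
  rw [Real.dist_eq] at this
  exact this.le

lemma subAngle_mem_Icc (V W : Submodule ℝ (Euc d)) :
    subAngle V W ∈ Set.Icc (0 : ℝ) Real.pi :=
  ⟨Real.arccos_nonneg _, Real.arccos_le_pi _⟩

lemma subAngle_perturb {ε : ℝ} (hε : 0 < ε) : ∃ δ > 0, δ ≤ 1/4 ∧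
    ∀ (R R' : Euc d ≃L[ℝ] Euc d), ‖(R : Op d) - 1‖ ≤ δ → ‖(R' : Op d) - 1‖ ≤ δ →
    ∀ V W : Submodule ℝ (Euc d), (∃ v ∈ V, ‖v‖ = 1) → (∃ w ∈ W, ‖w‖ = 1) →
    |subAngle (V.map ((R : Op d) : Euc d →ₗ[ℝ] Euc d)) (W.map ((R' : Op d) : Euc d →ₗ[ℝ] Euc d)) - subAngle V W| ≤ ε := by
  obtain ⟨δ₀, hδ₀, hmod⟩ := arccos_mod hε
  refine ⟨min (1/4) (δ₀/8), by positivity, min_le_left _ _, ?_⟩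
  set δ := min (1/4) (δ₀/8) with hδdef
  have hδ4 : δ ≤ 1/4 := min_le_left _ _
  have hδ2 : δ ≤ 1/2 := by linarith
  have hδ8 : 8 * δ ≤ δ₀ := by
    have := min_le_right (1/4 : ℝ) (δ₀/8); simp only [← hδdef] at this; linarith
  have hδ0 : 0 ≤ δ := by positivity
  intro R R' hR hR' V W hV hW
  -- correspondences
  have hRs : ‖((R.symm : Euc d ≃L[ℝ] Euc d) : Op d) - 1‖ ≤ 2 * δ := symm_bound R hR hδ2
  have hR's : ‖((R'.symm : Euc d ≃L[ℝ] Euc d) : Op d) - 1‖ ≤ 2 * δ := symm_bound R' hR' hδ2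
  have hVf : ∀ v ∈ V, ‖v‖ = 1 → ∃ v₁ ∈ V.map ((R : Op d) : Euc d →ₗ[ℝ] Euc d), ‖v₁‖ = 1 ∧ ‖v₁ - v‖ ≤ 4 * δ := by
    intro v hv h1
    obtain ⟨v₁, hv₁, h₁, hd⟩ := approx_unit R hR hδ2 hv h1
    exact ⟨v₁, hv₁, h₁, by linarith⟩
  have hWf : ∀ w ∈ W, ‖w‖ = 1 → ∃ w₁ ∈ W.map ((R' : Op d) : Euc d →ₗ[ℝ] Euc d), ‖w₁‖ = 1 ∧ ‖w₁ - w‖ ≤ 4 * δ := by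
    intro w hw h1
    obtain ⟨w₁, hw₁, h₁, hd⟩ := approx_unit R' hR' hδ2 hw h1
    exact ⟨w₁, hw₁, h₁, by linarith⟩
  have hVb : ∀ v₁ ∈ V.map ((R : Op d) : Euc d →ₗ[ℝ] Euc d), ‖v₁‖ = 1 → ∃ v ∈ V, ‖v‖ = 1 ∧ ‖v - v₁‖ ≤ 4 * δ := by
    intro v₁ hv₁ h₁
    obtain ⟨v, hv, h1, hd⟩ := approx_unit R.symm hRs (by linarith) hv₁ h₁
    rw [map_symm_cancel] at hv
    exact ⟨v, hv, h1, by linarith⟩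
  have hWb : ∀ w₁ ∈ W.map ((R' : Op d) : Euc d →ₗ[ℝ] Euc d), ‖w₁‖ = 1 → ∃ w ∈ W, ‖w‖ = 1 ∧ ‖w - w₁‖ ≤ 4 * δ := by
    intro w₁ hw₁ h₁
    obtain ⟨w, hw, h1, hd⟩ := approx_unit R'.symm hR's (by linarith) hw₁ h₁
    rw [map_symm_cancel] at hw
    exact ⟨w, hw, h1, by linarith⟩
  -- nonemptiness of images
  have hV₁ : ∃ v ∈ V.map ((R : Op d) : Euc d →ₗ[ℝ] Euc d), ‖v‖ = 1 := by
    obtain ⟨v, hv, h1⟩ := hV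
    obtain ⟨v₁, hv₁, h₁, _⟩ := hVf v hv h1
    exact ⟨v₁, hv₁, h₁⟩
  have hW₁ : ∃ w ∈ W.map ((R' : Op d) : Euc d →ₗ[ℝ] Euc d), ‖w‖ = 1 := by
    obtain ⟨w, hw, h1⟩ := hW
    obtain ⟨w₁, hw₁, h₁, _⟩ := hWf w hw h1
    exact ⟨w₁, hw₁, h₁⟩
  have c1 : cosVW (V.map ((R : Op d) : Euc d →ₗ[ℝ] Euc d)) (W.map ((R' : Op d) : Euc d →ₗ[ℝ] Euc d)) ≤ cosVW V W + 2 * (4 * δ) :=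
    cos_compare hV hW hW₁ hVf (fun w₁ hw₁ h₁ => by
      obtain ⟨w, hw, h1, hd⟩ := hWb w₁ hw₁ h₁
      exact ⟨w, hw, h1, by rwa [norm_sub_rev] at hd⟩)
  have c2 : cosVW V W ≤ cosVW (V.map ((R : Op d) : Euc d →ₗ[ℝ] Euc d)) (W.map ((R' : Op d) : Euc d →ₗ[ℝ] Euc d)) + 2 * (4 * δ) :=
    cos_compare hV₁ hW₁ hW
      (fun v₁ hv₁ h₁ => hVb v₁ hv₁ h₁)
      (fun w hw h1 => by
        obtain ⟨w₁, hw₁, h₁, hd⟩ := hWf w hw h1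
        exact ⟨w₁, hw₁, h₁, by rwa [norm_sub_rev] at hd⟩)
  rw [subAngle_eq, subAngle_eq]
  exact hmod _ _ (cosVW_mem_Icc hV₁ hW₁) (cosVW_mem_Icc hV hW)
    (by rw [abs_le]; constructor <;> linarith)

lemma subAngle_isom (e : Euc d ≃ₗᵢ[ℝ] Euc d) (V W : Submodule ℝ (Euc d)) :
    subAngle (V.map (((e.toContinuousLinearEquiv : Euc d ≃L[ℝ] Euc d) : Op d) : Euc d →ₗ[ℝ] Euc d))
      (W.map (((e.toContinuousLinearEquiv : Euc d ≃L[ℝ] Euc d) : Op d) : Euc d →ₗ[ℝ] Euc d)) = subAngle V W := by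
  set eC : Op d := ((e.toContinuousLinearEquiv : Euc d ≃L[ℝ] Euc d) : Op d) with heC
  have happ : ∀ x : Euc d, eC x = e x := fun x => rfl
  have hinn : ∀ (v : Euc d), innSup (e v) (W.map (eC : Euc d →ₗ[ℝ] Euc d)) = innSup v W := by
    intro v
    unfold innSup
    congr 1
    ext y
    constructor
    · rintro ⟨w, hw, h1, rfl⟩
      obtain ⟨w₀, hw₀, rfl⟩ := hw
      rw [ContinuousLinearMap.coe_coe, happ]
      exact ⟨w₀, hw₀, by rw [← e.norm_map w₀]; exact h1,
        by rw [e.inner_map_map]⟩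
    · rintro ⟨w₀, hw₀, h1, rfl⟩
      exact ⟨eC w₀, Submodule.mem_map_of_mem hw₀, by rw [happ, e.norm_map]; exact h1,
        by rw [happ, e.inner_map_map]⟩
  rw [subAngle_eq, subAngle_eq]
  congr 1
  unfold cosVW
  congr 1
  ext x
  constructor
  · rintro ⟨v, hv, h1, rfl⟩
    obtain ⟨v₀, hv₀, rfl⟩ := hv
    rw [ContinuousLinearMap.coe_coe, happ]
    exact ⟨v₀, hv₀, by rw [← e.norm_map v₀]; exact h1, (hinn v₀)⟩
  · rintro ⟨v₀, hv₀, h1, rfl⟩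
    exact ⟨eC v₀, Submodule.mem_map_of_mem hv₀, by rw [happ, e.norm_map]; exact h1,
      by rw [happ, hinn]⟩
lemma alphaAvg_mem_Icc (A : ℕ → Euc d ≃L[ℝ] Euc d) (V : Submodule ℝ (Euc d)) (n : ℕ) :
    alphaAvg A V n ∈ Set.Icc (0 : ℝ) Real.pi := by
  constructor
  · exact mul_nonneg (inv_nonneg.2 (Nat.cast_nonneg n))
      (Finset.sum_nonneg fun j _ => Real.arccos_nonneg _)
  · rcases Nat.eq_zero_or_pos n with rfl | hn
    · simp [alphaAvg]
      exact Real.pi_nonneg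
    · have hn0 : (0:ℝ) < (n:ℝ) := Nat.cast_pos.2 hn
      have hsum : ∑ j ∈ Finset.range n,
          subAngle (V.map ((PhiN A j : Op d) : Euc d →ₗ[ℝ] Euc d)) (V.map ((PhiN A (j + 1) : Op d) : Euc d →ₗ[ℝ] Euc d))
          ≤ (n : ℝ) * Real.pi := by
        calc ∑ j ∈ Finset.range n,
            subAngle (V.map ((PhiN A j : Op d) : Euc d →ₗ[ℝ] Euc d)) (V.map ((PhiN A (j + 1) : Op d) : Euc d →ₗ[ℝ] Euc d))
            ≤ (Finset.range n).card • Real.pi :=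
              Finset.sum_le_card_nsmul _ _ _ (fun j _ => (subAngle_mem_Icc _ _).2)
          _ = (n : ℝ) * Real.pi := by rw [Finset.card_range, nsmul_eq_mul]
      calc alphaAvg A V n ≤ (n:ℝ)⁻¹ * ((n:ℝ) * Real.pi) :=
            mul_le_mul_of_nonneg_left hsum (inv_nonneg.2 hn0.le)
        _ = Real.pi := by field_simp

lemma limsup_le_close {x y : ℕ → ℝ} (hx0 : ∀ n, (0:ℝ) ≤ x n) (hyb : ∀ n, y n ≤ Real.pi)
    (h : ∀ ε > 0, ∀ᶠ n in atTop, |x n - y n| ≤ ε) :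
    limsup x atTop ≤ limsup y atTop := by
  have hcx : IsCoboundedUnder (· ≤ ·) atTop x := isCoboundedUnder_le_of_le atTop hx0
  have hby : IsBoundedUnder (· ≤ ·) (atTop : Filter ℕ) y := isBoundedUnder_of ⟨Real.pi, hyb⟩
  refine le_of_forall_pos_le_add fun ε hε => ?_
  have h1 : ∀ᶠ n in atTop, y n < limsup y atTop + ε/2 :=
    eventually_lt_of_limsup_lt (lt_add_of_pos_right _ (half_pos hε)) hby
  have h2 := h (ε/2) (half_pos hε)
  refine limsup_le_of_le hcx ?_
  filter_upwards [h1, h2] with n hn1 hn2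
  have := abs_le.mp hn2
  linarith [this.1, this.2]

lemma liminf_ge_close {x y : ℕ → ℝ} (hxb : ∀ n, x n ≤ Real.pi) (hy0 : ∀ n, (0:ℝ) ≤ y n)
    (h : ∀ ε > 0, ∀ᶠ n in atTop, |x n - y n| ≤ ε) :
    liminf y atTop ≤ liminf x atTop := by
  have hcx : IsCoboundedUnder (· ≥ ·) atTop x := isCoboundedUnder_ge_of_le atTop hxb
  have hby : IsBoundedUnder (· ≥ ·) (atTop : Filter ℕ) y := isBoundedUnder_of ⟨0, hy0⟩
  refine le_of_forall_pos_le_add fun ε hε => ?_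
  have h1 : ∀ᶠ n in atTop, liminf y atTop - ε/2 < y n :=
    eventually_lt_of_lt_liminf (by linarith) hby
  have h2 := h (ε/2) (half_pos hε)
  have h3 : liminf y atTop - ε ≤ liminf x atTop := by
    refine le_liminf_of_le hcx ?_
    filter_upwards [h1, h2] with n hn1 hn2
    have := abs_le.mp hn2
    linarith [this.1, this.2]
  linarith

lemma close_limsup_liminf {x y : ℕ → ℝ}
    (hx : ∀ n, x n ∈ Set.Icc (0:ℝ) Real.pi) (hy : ∀ n, y n ∈ Set.Icc (0:ℝ) Real.pi)
    (h : ∀ ε > 0, ∀ᶠ n in atTop, |x n - y n| ≤ ε) :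
    limsup x atTop = limsup y atTop ∧ liminf x atTop = liminf y atTop := by
  have h' : ∀ ε > 0, ∀ᶠ n in atTop, |y n - x n| ≤ ε := by
    intro ε hε
    filter_upwards [h ε hε] with n hn
    rwa [abs_sub_comm]
  exact ⟨le_antisymm
      (limsup_le_close (fun n => (hx n).1) (fun n => (hy n).2) h)
      (limsup_le_close (fun n => (hy n).1) (fun n => (hx n).2) h'),
    le_antisymm
      (liminf_ge_close (fun n => (hy n).2) (fun n => (hx n).1) h')
      (liminf_ge_close (fun n => (hx n).2) (fun n => (hy n).1) h)⟩

lemma phiN_conj {A At Q : ℕ → Euc d ≃L[ℝ] Euc d}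
    (hAt : ∀ n : ℕ, At n = ((Q n).symm.trans (A n)).trans (Q (n + 1))) :
    ∀ (n : ℕ) (x : Euc d), PhiN At n x = Q n (PhiN A n ((Q 0).symm x)) := by
  intro n
  induction n with
  | zero => intro x; simp [PhiN]
  | succ n ih =>
    intro x
    have h1 : PhiN At (n+1) x = At n (PhiN At n x) := rfl
    rw [h1, ih, hAt n]
    simp [PhiN, ContinuousLinearEquiv.trans_apply, ContinuousLinearEquiv.symm_apply_apply]

lemma map_phiN {A At Q : ℕ → Euc d ≃L[ℝ] Euc d}
    (hAt : ∀ n : ℕ, At n = ((Q n).symm.trans (A n)).trans (Q (n + 1)))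
    (V : Submodule ℝ (Euc d)) (n : ℕ) :
    V.map ((PhiN At n : Op d) : Euc d →ₗ[ℝ] Euc d) =
      ((V.map ((((Q 0).symm : Euc d ≃L[ℝ] Euc d) : Op d) : Euc d →ₗ[ℝ] Euc d)).map ((PhiN A n : Op d) : Euc d →ₗ[ℝ] Euc d)).map
        (((Q n : Euc d ≃L[ℝ] Euc d) : Op d) : Euc d →ₗ[ℝ] Euc d) := by
  ext x
  simp only [Submodule.mem_map, ContinuousLinearEquiv.coe_coe]
  constructor
  · rintro ⟨v, hv, rfl⟩
    exact ⟨PhiN A n ((Q 0).symm v), ⟨(Q 0).symm v, ⟨v, hv, rfl⟩, rfl⟩,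
      (phiN_conj hAt n v).symm⟩
  · rintro ⟨y, ⟨z, ⟨v, hv, rfl⟩, rfl⟩, rfl⟩
    exact ⟨v, hv, phiN_conj hAt n v⟩

lemma finrank_map (F : Euc d ≃L[ℝ] Euc d) (V : Submodule ℝ (Euc d)) :
    Module.finrank ℝ (V.map ((F : Op d) : Euc d →ₗ[ℝ] Euc d)) = Module.finrank ℝ V := by
  have h : V.map ((F : Op d) : Euc d →ₗ[ℝ] Euc d) = V.map ((F.toLinearEquiv : Euc d ≃ₗ[ℝ] Euc d) : Euc d →ₗ[ℝ] Euc d) := by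
    ext x
    simp only [Submodule.mem_map, ContinuousLinearEquiv.coe_coe, LinearEquiv.coe_coe,
      ContinuousLinearEquiv.coe_toLinearEquiv, ContinuousLinearMap.coe_coe]
  rw [h]
  exact LinearEquiv.finrank_map_eq F.toLinearEquiv V

lemma master {A At : ℕ → Euc d ≃L[ℝ] Euc d} {s : ℕ} (E : Euc d ≃L[ℝ] Euc d)
    (hls : ∀ V : Submodule ℝ (Euc d), Module.finrank ℝ V = s →
      limsup (alphaAvg At V) atTop = limsup (alphaAvg A (V.map ((E.symm : Op d) : Euc d →ₗ[ℝ] Euc d))) atTop)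
    (hli : ∀ V : Submodule ℝ (Euc d), Module.finrank ℝ V = s →
      liminf (alphaAvg At V) atTop = liminf (alphaAvg A (V.map ((E.symm : Op d) : Euc d →ₗ[ℝ] Euc d))) atTop) :
    angSpecN A s = angSpecN At s ∧
    thSupLimsup A s = thSupLimsup At s ∧
    thSupLiminf A s = thSupLiminf At s ∧
    thInfLimsup A s = thInfLimsup At s ∧
    thInfLiminf A s = thInfLiminf At s := by
  have key : ∀ g : (ℕ → ℝ) → ℝ,
      (∀ V : Submodule ℝ (Euc d), Module.finrank ℝ V = s →
        g (alphaAvg At V) = g (alphaAvg A (V.map ((E.symm : Op d) : Euc d →ₗ[ℝ] Euc d)))) →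
      {x : ℝ | ∃ V : Submodule ℝ (Euc d), Module.finrank ℝ V = s ∧ x = g (alphaAvg A V)} =
      {x : ℝ | ∃ V : Submodule ℝ (Euc d), Module.finrank ℝ V = s ∧ x = g (alphaAvg At V)} := by
    intro g hg
    ext x
    constructor
    · rintro ⟨W, hW, rfl⟩
      have hfr : Module.finrank ℝ (W.map ((E : Op d) : Euc d →ₗ[ℝ] Euc d)) = s := by
        rw [finrank_map]; exact hW
      refine ⟨W.map ((E : Op d) : Euc d →ₗ[ℝ] Euc d), hfr, ?_⟩
      rw [hg _ hfr, map_symm_cancel]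
    · rintro ⟨V, hV, rfl⟩
      refine ⟨V.map ((E.symm : Op d) : Euc d →ₗ[ℝ] Euc d), ?_, hg V hV⟩
      rw [finrank_map E.symm]; exact hV
  refine ⟨?_, ?_, ?_, ?_, ?_⟩
  · unfold angSpecN
    refine congrArg closure ?_
    ext θ
    constructor
    · rintro ⟨h0, hπ, W, hW, h1, h2⟩
      have hfr : Module.finrank ℝ (W.map ((E : Op d) : Euc d →ₗ[ℝ] Euc d)) = s := by
        rw [finrank_map]; exact hW
      refine ⟨h0, hπ, W.map ((E : Op d) : Euc d →ₗ[ℝ] Euc d), hfr, ?_, ?_⟩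
      · rw [hli _ hfr, map_symm_cancel]; exact h1
      · rw [hls _ hfr, map_symm_cancel]; exact h2
    · rintro ⟨h0, hπ, V, hV, h1, h2⟩
      refine ⟨h0, hπ, V.map ((E.symm : Op d) : Euc d →ₗ[ℝ] Euc d), ?_, ?_, ?_⟩
      · rw [finrank_map E.symm]; exact hV
      · rw [← hli V hV]; exact h1
      · rw [← hls V hV]; exact h2
  · exact congrArg sSup (key (fun u => limsup u atTop) hls)
  · exact congrArg sSup (key (fun u => liminf u atTop) hli)
  · exact congrArg sInf (key (fun u => limsup u atTop) hls)
  · exact congrArg sInf (key (fun u => liminf u atTop) hli)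

lemma case_i {A At Q : ℕ → Euc d ≃L[ℝ] Euc d}
    (hAt : ∀ n : ℕ, At n = ((Q n).symm.trans (A n)).trans (Q (n + 1)))
    (q : ℕ → ℝ) (hq0 : ∀ n, q n ≠ 0) (hq : ∀ n, (Q n : Op d) = q n • (1 : Op d)) :
    ∀ V : Submodule ℝ (Euc d), alphaAvg At V = alphaAvg A (V.map (((Q 0).symm : Op d) : Euc d →ₗ[ℝ] Euc d)) := by
  have map_scalar : ∀ (n : ℕ) (W : Submodule ℝ (Euc d)), W.map (((Q n) : Op d) : Euc d →ₗ[ℝ] Euc d) = W := by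
    intro n W
    ext x
    simp only [Submodule.mem_map, hq n, ContinuousLinearMap.smul_apply,
      ContinuousLinearMap.one_apply]
    constructor
    · rintro ⟨y, hy, rfl⟩
      exact W.smul_mem _ hy
    · intro hx
      exact ⟨(q n)⁻¹ • x, W.smul_mem _ hx, smul_inv_smul₀ (hq0 n) x⟩
  intro V
  funext n
  unfold alphaAvg
  congr 1
  refine Finset.sum_congr rfl fun j _ => ?_
  rw [map_phiN hAt V j, map_phiN hAt V (j + 1), map_scalar j, map_scalar (j + 1)]

lemma case_ii {A At Q : ℕ → Euc d ≃L[ℝ] Euc d} {s : ℕ} (hs : 1 ≤ s)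
    (hAt : ∀ n : ℕ, At n = ((Q n).symm.trans (A n)).trans (Q (n + 1)))
    (Qlim : Op d) (hQt : Tendsto (fun n => (Q n : Op d)) atTop (nhds Qlim))
    (hQiso : ∀ x : Euc d, ‖Qlim x‖ = ‖x‖) :
    ∀ V : Submodule ℝ (Euc d), Module.finrank ℝ V = s →
      (limsup (alphaAvg At V) atTop
          = limsup (alphaAvg A (V.map (((Q 0).symm : Op d) : Euc d →ₗ[ℝ] Euc d))) atTop) ∧
      (liminf (alphaAvg At V) atTop
          = liminf (alphaAvg A (V.map (((Q 0).symm : Op d) : Euc d →ₗ[ℝ] Euc d))) atTop) := by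
  intro V hV
  set li : Euc d →ₗᵢ[ℝ] Euc d := ⟨Qlim.toLinearMap, hQiso⟩ with hlidef
  have hsurj : Function.Surjective li := by
    have hinj : Function.Injective li.toLinearMap := li.injective
    exact LinearMap.injective_iff_surjective.mp hinj
  set e := LinearIsometryEquiv.ofSurjective li hsurj with hedef
  set eC := e.toContinuousLinearEquiv with heCdef
  have happeC : ∀ x : Euc d, eC x = Qlim x := fun x => rfl
  set R : ℕ → Euc d ≃L[ℝ] Euc d := fun n => (Q n).trans eC.symm with hRdef
  have hRapp : ∀ (n : ℕ) (x : Euc d), R n x = eC.symm (Q n x) := fun n x => rfl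
  have hfact : ∀ n : ℕ, ((R n) : Op d) - 1
      = ((eC.symm : Euc d ≃L[ℝ] Euc d) : Op d).comp ((Q n : Op d) - Qlim) := by
    intro n
    ext x
    simp only [ContinuousLinearMap.sub_apply, ContinuousLinearMap.coe_comp',
      Function.comp_apply, ContinuousLinearMap.one_apply, ContinuousLinearEquiv.coe_coe]
    rw [hRapp, map_sub]
    have hqq : eC.symm (Qlim x) = x := by
      rw [← happeC, ContinuousLinearEquiv.symm_apply_apply]
    rw [hqq]
  have htendR : Tendsto (fun n => ‖((R n) : Op d) - 1‖) atTop (nhds 0) := by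
    have h0 : Tendsto (fun n => ‖(Q n : Op d) - Qlim‖) atTop (nhds 0) := by
      have h1 := hQt.sub (tendsto_const_nhds (x := Qlim))
      rw [sub_self] at h1
      have h1n := h1.norm
      rw [norm_zero] at h1n
      exact h1n
    have h2 := h0.const_mul ‖((eC.symm : Euc d ≃L[ℝ] Euc d) : Op d)‖
    rw [mul_zero] at h2
    refine squeeze_zero (fun n => norm_nonneg _) (fun n => ?_) h2
    rw [hfact n]
    exact ContinuousLinearMap.opNorm_comp_le _ _
  set V' := V.map ((((Q 0).symm : Euc d ≃L[ℝ] Euc d) : Op d) : Euc d →ₗ[ℝ] Euc d) with hV'def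
  have hV' : Module.finrank ℝ V' = s := by
    rw [hV'def, finrank_map]; exact hV
  set X : ℕ → Submodule ℝ (Euc d) := fun j => V'.map (((PhiN A j) : Op d) : Euc d →ₗ[ℝ] Euc d) with hXdef
  have hXfr : ∀ j, Module.finrank ℝ (X j) = s := by
    intro j
    rw [hXdef]
    simpa only [finrank_map] using hV'
  have hXunit : ∀ j, ∃ w ∈ X j, ‖w‖ = 1 := fun j => exists_unit (by rw [hXfr j]; exact hs)
  have hcomp : ∀ (n : ℕ) (W : Submodule ℝ (Euc d)),
      W.map (((Q n) : Op d) : Euc d →ₗ[ℝ] Euc d) = (W.map (((R n) : Op d) : Euc d →ₗ[ℝ] Euc d)).map (((eC : Euc d ≃L[ℝ] Euc d) : Op d) : Euc d →ₗ[ℝ] Euc d) := by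
    intro n W
    ext x
    simp only [Submodule.mem_map, ContinuousLinearEquiv.coe_coe]
    constructor
    · rintro ⟨v, hv, rfl⟩
      refine ⟨R n v, ⟨v, hv, rfl⟩, ?_⟩
      rw [hRapp]
      exact eC.apply_symm_apply _
    · rintro ⟨y, ⟨v, hv, rfl⟩, rfl⟩
      refine ⟨v, hv, ?_⟩
      simp only [ContinuousLinearMap.coe_coe, ContinuousLinearEquiv.coe_coe]
      rw [hRapp]
      exact (eC.apply_symm_apply _).symm
  set T : ℕ → ℝ := fun j =>
    subAngle ((X j).map (((R j) : Op d) : Euc d →ₗ[ℝ] Euc d)) ((X (j+1)).map (((R (j+1)) : Op d) : Euc d →ₗ[ℝ] Euc d)) with hTdef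
  set t : ℕ → ℝ := fun j => subAngle (X j) (X (j+1)) with htdef
  have hterm : ∀ j, subAngle (V.map (((PhiN At j) : Op d) : Euc d →ₗ[ℝ] Euc d)) (V.map (((PhiN At (j+1)) : Op d) : Euc d →ₗ[ℝ] Euc d))
      = T j := by
    intro j
    rw [map_phiN hAt V j, map_phiN hAt V (j+1), hcomp j, hcomp (j+1), hTdef]
    exact subAngle_isom e _ _
  have hclose : ∀ ε > 0, ∀ᶠ n in atTop, |alphaAvg At V n - alphaAvg A V' n| ≤ ε := by
    intro ε hε
    obtain ⟨δ, hδpos, hδ4, hpert⟩ := subAngle_perturb (d := d) (half_pos hε)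
    obtain ⟨J, hJ⟩ := (Metric.tendsto_atTop.mp htendR) δ hδpos
    have hJd : ∀ j, J ≤ j → ‖((R j) : Op d) - 1‖ ≤ δ := by
      intro j hj
      have hd := hJ j hj
      rw [Real.dist_eq, sub_zero, abs_of_nonneg (norm_nonneg _)] at hd
      exact hd.le
    have htermbound : ∀ j, J ≤ j → |T j - t j| ≤ ε/2 := by
      intro j hj
      exact hpert (R j) (R (j+1)) (hJd j hj) (hJd (j+1) (by omega)) (X j) (X (j+1))
        (hXunit j) (hXunit (j+1))
    have htermpi : ∀ j, |T j - t j| ≤ Real.pi := by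
      intro j
      have h1 := subAngle_mem_Icc ((X j).map (((R j) : Op d) : Euc d →ₗ[ℝ] Euc d)) ((X (j+1)).map (((R (j+1)) : Op d) : Euc d →ₗ[ℝ] Euc d))
      have h2 := subAngle_mem_Icc (X j) (X (j+1))
      rw [hTdef, htdef, abs_le]
      constructor
      · simp only
        linarith [h1.1, h2.2]
      · simp only
        linarith [h1.2, h2.1]
    have hNt : Tendsto (fun n : ℕ => (n:ℝ)⁻¹ * ((J:ℝ) * Real.pi)) atTop (nhds 0) := by
      have h3 := tendsto_inv_atTop_nhds_zero_nat.mul_const ((J:ℝ) * Real.pi)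
      simpa using h3
    have hev := hNt.eventually (eventually_le_nhds (half_pos hε))
    filter_upwards [hev, eventually_ge_atTop J, eventually_ge_atTop 1] with n h1 h2 h3
    have hn0 : (0:ℝ) < (n:ℝ) := by exact_mod_cast h3
    have hdiff : alphaAvg At V n - alphaAvg A V' n
        = (n:ℝ)⁻¹ * ∑ j ∈ Finset.range n, (T j - t j) := by
      unfold alphaAvg
      rw [← mul_sub, ← Finset.sum_sub_distrib]
      congr 1
      refine Finset.sum_congr rfl fun j _ => ?_
      rw [hterm j]
    have hsum : |∑ j ∈ Finset.range n, (T j - t j)| ≤ (J:ℝ) * Real.pi + (n:ℝ) * (ε/2) := by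
      calc |∑ j ∈ Finset.range n, (T j - t j)| ≤ ∑ j ∈ Finset.range n, |T j - t j| :=
            Finset.abs_sum_le_sum_abs _ _
        _ = ∑ j ∈ Finset.Ico 0 J, |T j - t j| + ∑ j ∈ Finset.Ico J n, |T j - t j| := by
            rw [Finset.range_eq_Ico, ← Finset.sum_Ico_consecutive _ (Nat.zero_le J) h2]
        _ ≤ (J:ℝ) * Real.pi + (n:ℝ) * (ε/2) := by
            refine add_le_add ?_ ?_
            · calc ∑ j ∈ Finset.Ico 0 J, |T j - t j|
                  ≤ (Finset.Ico 0 J).card • Real.pi :=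
                    Finset.sum_le_card_nsmul _ _ _ (fun j _ => htermpi j)
                _ = (J:ℝ) * Real.pi := by simp [nsmul_eq_mul]
            · calc ∑ j ∈ Finset.Ico J n, |T j - t j|
                  ≤ (Finset.Ico J n).card • (ε/2) :=
                    Finset.sum_le_card_nsmul _ _ _
                      (fun j hj => htermbound j (Finset.mem_Ico.mp hj).1)
                _ = ((n - J : ℕ):ℝ) * (ε/2) := by simp [nsmul_eq_mul, Nat.card_Ico]
                _ ≤ (n:ℝ) * (ε/2) := by
                    have hc : ((n - J:ℕ):ℝ) ≤ (n:ℝ) := by exact_mod_cast Nat.sub_le n J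
                    exact mul_le_mul_of_nonneg_right hc (half_pos hε).le
    calc |alphaAvg At V n - alphaAvg A V' n| = (n:ℝ)⁻¹ * |∑ j ∈ Finset.range n, (T j - t j)| := by
          rw [hdiff, abs_mul, abs_of_nonneg (inv_nonneg.2 hn0.le)]
      _ ≤ (n:ℝ)⁻¹ * ((J:ℝ) * Real.pi + (n:ℝ) * (ε/2)) :=
          mul_le_mul_of_nonneg_left hsum (inv_nonneg.2 hn0.le)
      _ = (n:ℝ)⁻¹ * ((J:ℝ) * Real.pi) + ε/2 := by
          field_simp
      _ ≤ ε/2 + ε/2 := add_le_add_left h1 _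
      _ = ε := by ring
  exact close_limsup_liminf (alphaAvg_mem_Icc At V) (alphaAvg_mem_Icc A V') hclose

end St6

/-- invariance of the outer angular spectrum (and of the four outer
angular values) under kinematic similarity `Ã_n = Q_{n+1} A_n Q_n⁻¹` in the cases
(i) `Q_n = q_n I`, `q_n ≠ 0`, or (ii) `Q_n → Q` with `Q` orthogonal. -/
theorem statement6 {d s : ℕ} (A Q : ℕ → Euc d ≃L[ℝ] Euc d)
    (hbd : ∃ M : ℝ, ∀ n : ℕ, ‖(A n : Op d)‖ ≤ M ∧ ‖((A n).symm : Op d)‖ ≤ M)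
    (hs : 1 ≤ s)
    (At : ℕ → Euc d ≃L[ℝ] Euc d)
    (hAt : ∀ n : ℕ, At n = ((Q n).symm.trans (A n)).trans (Q (n + 1)))
    (hcase :
      (∃ q : ℕ → ℝ, (∀ n, q n ≠ 0) ∧ ∀ n, (Q n : Op d) = q n • (1 : Op d)) ∨
      (∃ Qlim : Op d, Tendsto (fun n => (Q n : Op d)) atTop (nhds Qlim) ∧
        ∀ x : Euc d, ‖Qlim x‖ = ‖x‖)) :
    angSpecN A s = angSpecN At s ∧
    thSupLimsup A s = thSupLimsup At s ∧
    thSupLiminf A s = thSupLiminf At s ∧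
    thInfLimsup A s = thInfLimsup At s ∧
    thInfLiminf A s = thInfLiminf At s := by
  rcases hcase with ⟨q, hq0, hq⟩ | ⟨Qlim, hQt, hQiso⟩
  · have hpt := St6.case_i hAt q hq0 hq
    exact St6.master (Q 0) (fun V _ => by rw [hpt V]) (fun V _ => by rw [hpt V])
  · have h := St6.case_ii hs hAt Qlim hQt hQiso
    exact St6.master (Q 0) (fun V hV => (h V hV).1) (fun V hV => (h V hV).2)
end
end

section
/- Let 𝒱 be a set, let 𝒲 be a real normed vector space, and let b_n : 𝒱 → 𝒲 (n ∈ ℕ) be a sequence of maps that is AUap and uniformly bounded (i.e. sup_{n,V} ‖b_n(V)‖ < ∞). Then for every ε > 0 there exists N ∈ ℕ such that for all n ≥ m ≥ N, all k ∈ ℕ and all V ∈ 𝒱: ‖ (1/n) Σ_{j=1}^n b_j(V) − (1/m) Σ_{j=1}^m b_{j+k}(V) ‖ ≤ ε. -/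
open Filter

noncomputable section

/-- A sequence of maps `b_n : 𝒱 → 𝒲`, `n ∈ ℕ`, is asymptotically uniformly almost
periodic (AUap) w.r.t. the distance `ρ` on `𝒲`:
`∀ ε>0 ∃ P ∃ L : ∀ V ∀ ℓ ∃ p ∈ {ℓ,…,ℓ+P} : ∀ n ≥ L, ρ(b_n(V), b_{n+p}(V)) ≤ ε`. -/
def AUapSeq {V W : Type*} (ρ : W → W → ℝ) (b : ℕ → V → W) : Prop :=
  ∀ ε : ℝ, 0 < ε → ∃ P L : ℕ, 1 ≤ L ∧ ∀ v : V, ∀ l : ℕ, 1 ≤ l →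
    ∃ p : ℕ, l ≤ p ∧ p ≤ l + P ∧ ∀ n : ℕ, L ≤ n → ρ (b n v) (b (n + p) v) ≤ ε

private lemma sum_shift' {W : Type*} [AddCommMonoid W] (f : ℕ → W) (a c d : ℕ) :
    ∑ j ∈ Finset.Ioc a c, f (j + d) = ∑ j ∈ Finset.Ioc (a + d) (c + d), f j := by
  rw [← Finset.map_add_right_Ioc, Finset.sum_map]
  rfl

private lemma sum_blocks' {W : Type*} [AddCommMonoid W] (f : ℕ → W) (m q : ℕ) :
    ∑ j ∈ Finset.Ioc 0 (q * m), f j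
      = ∑ i ∈ Finset.range q, ∑ j ∈ Finset.Ioc 0 m, f (j + i * m) := by
  induction q with
  | zero => simp
  | succ q ih =>
    have h : Finset.Ioc 0 ((q + 1) * m) = Finset.Ioc 0 (m + q * m) := by
      congr 1
      ring
    rw [Finset.sum_range_succ, ← ih, sum_shift' f 0 m (q * m), zero_add, h,
      Finset.sum_Ioc_consecutive f (Nat.zero_le (q * m)) (Nat.le_add_left (q * m) m)]

/-- if `b_n : 𝒱 → 𝒲` (𝒲 a real normed space) is AUap and uniformly
bounded, then the averages satisfy a uniform Cauchy property:
`∀ ε>0 ∃ N ∀ n ≥ m ≥ N ∀ k ∀ V : ‖(1/n)Σ_{j=1}^n b_j(V) − (1/m)Σ_{j=1}^m b_{j+k}(V)‖ ≤ ε`. -/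
theorem statement17 {V : Type*} {W : Type*}
    [NormedAddCommGroup W] [NormedSpace ℝ W]
    (b : ℕ → V → W)
    (hAUap : AUapSeq (fun x y : W => ‖x - y‖) b)
    (hbd : ∃ B : ℝ, ∀ n : ℕ, 1 ≤ n → ∀ v : V, ‖b n v‖ ≤ B) :
    ∀ ε : ℝ, 0 < ε → ∃ N : ℕ, 1 ≤ N ∧
      ∀ n m : ℕ, N ≤ m → m ≤ n → ∀ k : ℕ, 1 ≤ k → ∀ v : V,
        ‖(n : ℝ)⁻¹ • ∑ j ∈ Finset.Icc 1 n, b j v -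
          (m : ℝ)⁻¹ • ∑ j ∈ Finset.Icc 1 m, b (j + k) v‖ ≤ ε := by
  obtain ⟨B₀, hB₀⟩ := hbd
  set B : ℝ := max B₀ 0 with hBdef
  have hB0 : 0 ≤ B := le_max_right _ _
  have hB : ∀ n : ℕ, 1 ≤ n → ∀ v : V, ‖b n v‖ ≤ B := fun n hn v =>
    (hB₀ n hn v).trans (le_max_left _ _)
  intro ε hε
  obtain ⟨P, L, hL1, hPL⟩ := hAUap (ε / 6) (by positivity)
  set C : ℝ := 2 * (P * B) + 2 * (L * B) with hCdef
  have hC0 : 0 ≤ C := by positivity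
  set N : ℕ := max L (max 1 ⌈C * 6 / ε⌉₊) with hNdef
  have hN1 : 1 ≤ N := le_trans (le_max_left 1 _) (le_max_right L _)
  have hNL : L ≤ N := le_max_left _ _
  -- for m ≥ N we have C ≤ m * (ε/6)
  have hCm : ∀ m : ℕ, N ≤ m → C ≤ (m : ℝ) * (ε / 6) := by
    intro m hm
    have h1 : (C * 6 / ε : ℝ) ≤ (⌈C * 6 / ε⌉₊ : ℝ) := Nat.le_ceil _
    have h2 : (⌈C * 6 / ε⌉₊ : ℝ) ≤ (m : ℝ) := by
      exact_mod_cast le_trans (le_trans (le_max_right 1 _) (le_max_right L _)) hm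
    have h3 : C * 6 / ε ≤ (m : ℝ) := h1.trans h2
    rw [div_le_iff₀ hε] at h3
    nlinarith
  -- Claim 1: shift estimate at sum level
  have claim1 : ∀ v : V, ∀ m : ℕ, N ≤ m → ∀ k : ℕ, 1 ≤ k →
      ‖(∑ j ∈ Finset.Ioc 0 m, b (j + k) v) - ∑ j ∈ Finset.Ioc 0 m, b j v‖
        ≤ (m : ℝ) * (ε / 3) := by
    intro v m hm k hk
    obtain ⟨p, hkp, hpkP, hp⟩ := hPL v k hk
    set d : ℕ := p - k with hddef
    have hpd : p = k + d := by omega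
    have hdP : d ≤ P := by omega
    set f : ℕ → W := fun j => b (j + k) v with hfdef
    -- rewrite the shifted sum
    have heq1 : (∑ j ∈ Finset.Ioc 0 m, b (j + p) v)
        = ∑ j ∈ Finset.Ioc d (m + d), f j := by
      have hsh := sum_shift' f 0 m d
      rw [zero_add] at hsh
      rw [← hsh]
      apply Finset.sum_congr rfl
      intro j _
      simp only [hfdef]
      congr 1
      omega
    have hsplit1 : (∑ j ∈ Finset.Ioc 0 d, f j) + ∑ j ∈ Finset.Ioc d (m + d), f j
        = ∑ j ∈ Finset.Ioc 0 (m + d), f j :=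
      Finset.sum_Ioc_consecutive f (Nat.zero_le _) (by omega)
    have hsplit2 : (∑ j ∈ Finset.Ioc 0 m, f j) + ∑ j ∈ Finset.Ioc m (m + d), f j
        = ∑ j ∈ Finset.Ioc 0 (m + d), f j :=
      Finset.sum_Ioc_consecutive f (Nat.zero_le _) (by omega)
    -- part (a): ‖Σ b(j+k) - Σ b(j+p)‖ ≤ 2 P B
    have hfB : ∀ j : ℕ, 1 ≤ j + k → ‖f j‖ ≤ B := fun j hj => hB _ hj v
    have hsum1 : ‖∑ j ∈ Finset.Ioc 0 d, f j‖ ≤ (d : ℝ) * B := by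
      calc ‖∑ j ∈ Finset.Ioc 0 d, f j‖ ≤ ∑ j ∈ Finset.Ioc 0 d, ‖f j‖ :=
            norm_sum_le _ _
        _ ≤ ∑ _j ∈ Finset.Ioc 0 d, B :=
            Finset.sum_le_sum (fun j _ => hfB j (by omega))
        _ = (d : ℝ) * B := by simp [mul_comm]
    have hsum2 : ‖∑ j ∈ Finset.Ioc m (m + d), f j‖ ≤ (d : ℝ) * B := by
      calc ‖∑ j ∈ Finset.Ioc m (m + d), f j‖ ≤ ∑ j ∈ Finset.Ioc m (m + d), ‖f j‖ :=
            norm_sum_le _ _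
        _ ≤ ∑ _j ∈ Finset.Ioc m (m + d), B :=
            Finset.sum_le_sum (fun j _ => hfB j (by omega))
        _ = (d : ℝ) * B := by simp [mul_comm]
    have ha : ‖(∑ j ∈ Finset.Ioc 0 m, b (j + k) v) - ∑ j ∈ Finset.Ioc 0 m, b (j + p) v‖
        ≤ 2 * ((P : ℝ) * B) := by
      have hid : (∑ j ∈ Finset.Ioc 0 m, b (j + k) v) - ∑ j ∈ Finset.Ioc 0 m, b (j + p) v
          = (∑ j ∈ Finset.Ioc 0 d, f j) - ∑ j ∈ Finset.Ioc m (m + d), f j := by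
        rw [heq1]
        have hbk : (∑ j ∈ Finset.Ioc 0 m, b (j + k) v) = ∑ j ∈ Finset.Ioc 0 m, f j := rfl
        rw [hbk]
        have h' := hsplit1.trans hsplit2.symm
        -- h' : a + x = c + y ; goal : c - x = a - y
        calc (∑ j ∈ Finset.Ioc 0 m, f j) - ∑ j ∈ Finset.Ioc d (m + d), f j
            = ((∑ j ∈ Finset.Ioc 0 m, f j) + ∑ j ∈ Finset.Ioc m (m + d), f j)
              - ∑ j ∈ Finset.Ioc m (m + d), f j - ∑ j ∈ Finset.Ioc d (m + d), f j := by
              abel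
          _ = ((∑ j ∈ Finset.Ioc 0 d, f j) + ∑ j ∈ Finset.Ioc d (m + d), f j)
              - ∑ j ∈ Finset.Ioc m (m + d), f j - ∑ j ∈ Finset.Ioc d (m + d), f j := by
              rw [← h']
          _ = (∑ j ∈ Finset.Ioc 0 d, f j) - ∑ j ∈ Finset.Ioc m (m + d), f j := by
              abel
      rw [hid]
      have hdB : (d : ℝ) * B ≤ (P : ℝ) * B := by
        apply mul_le_mul_of_nonneg_right _ hB0
        exact_mod_cast hdP
      calc ‖(∑ j ∈ Finset.Ioc 0 d, f j) - ∑ j ∈ Finset.Ioc m (m + d), f j‖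
          ≤ ‖∑ j ∈ Finset.Ioc 0 d, f j‖ + ‖∑ j ∈ Finset.Ioc m (m + d), f j‖ :=
            norm_sub_le _ _
        _ ≤ (d : ℝ) * B + (d : ℝ) * B := add_le_add hsum1 hsum2
        _ ≤ 2 * ((P : ℝ) * B) := by linarith
    -- part (b): ‖Σ b(j+p) - Σ b j‖ ≤ m * (ε/6) + 2 L B
    have hbpart : ‖(∑ j ∈ Finset.Ioc 0 m, b (j + p) v) - ∑ j ∈ Finset.Ioc 0 m, b j v‖
        ≤ (m : ℝ) * (ε / 6) + 2 * ((L : ℝ) * B) := by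
      have hterm : ∀ j ∈ Finset.Ioc 0 m,
          ‖b (j + p) v - b j v‖ ≤ ε / 6 + (if j < L then 2 * B else 0) := by
        intro j hj
        simp only [Finset.mem_Ioc] at hj
        by_cases hjL : j < L
        · simp only [hjL, if_true]
          have h1 : ‖b (j + p) v‖ ≤ B := hB _ (by omega) v
          have h2 : ‖b j v‖ ≤ B := hB _ (by omega) v
          have := norm_sub_le (b (j + p) v) (b j v)
          have hε6 : (0:ℝ) ≤ ε / 6 := by positivity
          linarith
        · simp only [hjL, if_false, add_zero]
          have := hp j (by omega)
          simpa [norm_sub_rev] using this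
      calc ‖(∑ j ∈ Finset.Ioc 0 m, b (j + p) v) - ∑ j ∈ Finset.Ioc 0 m, b j v‖
          = ‖∑ j ∈ Finset.Ioc 0 m, (b (j + p) v - b j v)‖ := by
            rw [Finset.sum_sub_distrib]
        _ ≤ ∑ j ∈ Finset.Ioc 0 m, ‖b (j + p) v - b j v‖ := norm_sum_le _ _
        _ ≤ ∑ j ∈ Finset.Ioc 0 m, (ε / 6 + (if j < L then 2 * B else 0)) :=
            Finset.sum_le_sum hterm
        _ = (m : ℝ) * (ε / 6) + ∑ j ∈ Finset.Ioc 0 m, (if j < L then 2 * B else 0) := by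
            rw [Finset.sum_add_distrib, Finset.sum_const]
            simp [mul_comm]
        _ ≤ (m : ℝ) * (ε / 6) + 2 * ((L : ℝ) * B) := by
            have : ∑ j ∈ Finset.Ioc 0 m, (if j < L then 2 * B else 0)
                = ∑ j ∈ (Finset.Ioc 0 m).filter (· < L), (2 * B) := by
              rw [Finset.sum_filter]
            rw [this]
            rw [Finset.sum_const]
            have hcard : ((Finset.Ioc 0 m).filter (· < L)).card ≤ L := by
              have hsub : (Finset.Ioc 0 m).filter (· < L) ⊆ Finset.Ioc 0 L := by
                intro j hj
                simp only [Finset.mem_filter, Finset.mem_Ioc] at hj ⊢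
                omega
              calc ((Finset.Ioc 0 m).filter (· < L)).card ≤ (Finset.Ioc 0 L).card :=
                    Finset.card_le_card hsub
                _ = L := by simp
            have : (((Finset.Ioc 0 m).filter (· < L)).card : ℝ) * (2 * B)
                ≤ (L : ℝ) * (2 * B) := by
              apply mul_le_mul_of_nonneg_right _ (by positivity)
              exact_mod_cast hcard
            simp only [nsmul_eq_mul]
            linarith
    -- combine
    have hCb := hCm m hm
    calc ‖(∑ j ∈ Finset.Ioc 0 m, b (j + k) v) - ∑ j ∈ Finset.Ioc 0 m, b j v‖
        ≤ ‖(∑ j ∈ Finset.Ioc 0 m, b (j + k) v) - ∑ j ∈ Finset.Ioc 0 m, b (j + p) v‖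
          + ‖(∑ j ∈ Finset.Ioc 0 m, b (j + p) v) - ∑ j ∈ Finset.Ioc 0 m, b j v‖ := by
          have := norm_add_le ((∑ j ∈ Finset.Ioc 0 m, b (j + k) v)
            - ∑ j ∈ Finset.Ioc 0 m, b (j + p) v)
            ((∑ j ∈ Finset.Ioc 0 m, b (j + p) v) - ∑ j ∈ Finset.Ioc 0 m, b j v)
          simpa using this
      _ ≤ 2 * ((P : ℝ) * B) + ((m : ℝ) * (ε / 6) + 2 * ((L : ℝ) * B)) :=
          add_le_add ha hbpart
      _ ≤ (m : ℝ) * (ε / 3) := by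
          simp only [hCdef] at hCb
          linarith
  -- Claim 1 averaged
  have claim1avg : ∀ v : V, ∀ m : ℕ, N ≤ m → ∀ k : ℕ, 1 ≤ k →
      ‖(m : ℝ)⁻¹ • (∑ j ∈ Finset.Ioc 0 m, b (j + k) v)
        - (m : ℝ)⁻¹ • ∑ j ∈ Finset.Ioc 0 m, b j v‖ ≤ ε / 3 := by
    intro v m hm k hk
    have hm0 : (0 : ℝ) < (m : ℝ) := by
      exact_mod_cast lt_of_lt_of_le hN1 hm
    rw [← smul_sub, norm_smul, norm_inv, Real.norm_natCast]
    calc ((m:ℝ))⁻¹ * ‖(∑ j ∈ Finset.Ioc 0 m, b (j + k) v) - ∑ j ∈ Finset.Ioc 0 m, b j v‖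
        ≤ ((m:ℝ))⁻¹ * ((m : ℝ) * (ε / 3)) := by
          apply mul_le_mul_of_nonneg_left (claim1 v m hm k hk) (by positivity)
      _ = ε / 3 := by field_simp
  -- Claim 2: block estimate, averaged
  have claim2avg : ∀ v : V, ∀ m : ℕ, N ≤ m → ∀ q : ℕ, 1 ≤ q →
      ‖((q * m : ℕ) : ℝ)⁻¹ • (∑ j ∈ Finset.Ioc 0 (q * m), b j v)
        - (m : ℝ)⁻¹ • ∑ j ∈ Finset.Ioc 0 m, b j v‖ ≤ ε / 3 := by
    intro v m hm q hq
    have hm1 : 1 ≤ m := le_trans hN1 hm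
    have hm0 : (0 : ℝ) < (m : ℝ) := by exact_mod_cast hm1
    have hq0 : (0 : ℝ) < (q : ℝ) := by exact_mod_cast hq
    have hqm0 : (0 : ℝ) < ((q * m : ℕ) : ℝ) := by
      push_cast; positivity
    have hblocks := sum_blocks' (fun j => b j v) m q
    -- the difference of block sums
    have hkey : (∑ j ∈ Finset.Ioc 0 (q * m), b j v) - q • (∑ j ∈ Finset.Ioc 0 m, b j v)
        = ∑ i ∈ Finset.range q,
            ((∑ j ∈ Finset.Ioc 0 m, b (j + i * m) v) - ∑ j ∈ Finset.Ioc 0 m, b j v) := by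
      rw [hblocks, Finset.sum_sub_distrib, Finset.sum_const, Finset.card_range]
    have hkeynorm : ‖(∑ j ∈ Finset.Ioc 0 (q * m), b j v)
        - q • (∑ j ∈ Finset.Ioc 0 m, b j v)‖ ≤ (q : ℝ) * ((m : ℝ) * (ε / 3)) := by
      rw [hkey]
      calc ‖∑ i ∈ Finset.range q,
            ((∑ j ∈ Finset.Ioc 0 m, b (j + i * m) v) - ∑ j ∈ Finset.Ioc 0 m, b j v)‖
          ≤ ∑ i ∈ Finset.range q,
            ‖(∑ j ∈ Finset.Ioc 0 m, b (j + i * m) v) - ∑ j ∈ Finset.Ioc 0 m, b j v‖ :=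
            norm_sum_le _ _
        _ ≤ ∑ _i ∈ Finset.range q, ((m : ℝ) * (ε / 3)) := by
            apply Finset.sum_le_sum
            intro i _
            by_cases hi : i = 0
            · subst hi
              simp only [Nat.zero_mul, Nat.add_zero, sub_self, norm_zero]
              positivity
            · exact claim1 v m hm (i * m) (by
                have : 1 ≤ i := Nat.one_le_iff_ne_zero.mpr hi
                calc 1 ≤ 1 * 1 := by norm_num
                  _ ≤ i * m := Nat.mul_le_mul this hm1)
        _ = (q : ℝ) * ((m : ℝ) * (ε / 3)) := by simp [mul_comm]
    -- now average
    have hsmul : ((q * m : ℕ) : ℝ)⁻¹ • (q • (∑ j ∈ Finset.Ioc 0 m, b j v))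
        = (m : ℝ)⁻¹ • ∑ j ∈ Finset.Ioc 0 m, b j v := by
      rw [smul_comm, ← Nat.cast_smul_eq_nsmul ℝ q, smul_smul]
      congr 1
      have hq' : (q : ℝ) ≠ 0 := ne_of_gt hq0
      have hm' : (m : ℝ) ≠ 0 := ne_of_gt hm0
      push_cast
      field_simp
    calc ‖((q * m : ℕ) : ℝ)⁻¹ • (∑ j ∈ Finset.Ioc 0 (q * m), b j v)
          - (m : ℝ)⁻¹ • ∑ j ∈ Finset.Ioc 0 m, b j v‖
        = ‖((q * m : ℕ) : ℝ)⁻¹ • ((∑ j ∈ Finset.Ioc 0 (q * m), b j v)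
            - q • (∑ j ∈ Finset.Ioc 0 m, b j v))‖ := by
          rw [smul_sub, hsmul]
      _ = ((q * m : ℕ) : ℝ)⁻¹ * ‖(∑ j ∈ Finset.Ioc 0 (q * m), b j v)
            - q • (∑ j ∈ Finset.Ioc 0 m, b j v)‖ := by
          rw [norm_smul, norm_inv, Real.norm_natCast]
      _ ≤ ((q * m : ℕ) : ℝ)⁻¹ * ((q : ℝ) * ((m : ℝ) * (ε / 3))) := by
          apply mul_le_mul_of_nonneg_left hkeynorm (by positivity)
      _ = ε / 3 := by
          push_cast
          field_simp
  -- Now the main statement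
  refine ⟨N, hN1, ?_⟩
  intro n m hm hmn k hk v
  have hn : N ≤ n := le_trans hm hmn
  have hm1 : 1 ≤ m := le_trans hN1 hm
  have hn1 : 1 ≤ n := le_trans hm1 hmn
  rw [show (1 : ℕ) = 0 + 1 from rfl, Finset.Icc_add_one_left_eq_Ioc, Finset.Icc_add_one_left_eq_Ioc]
  set An : W := (n : ℝ)⁻¹ • ∑ j ∈ Finset.Ioc 0 n, b j v with hAn
  set Am : W := (m : ℝ)⁻¹ • ∑ j ∈ Finset.Ioc 0 m, b j v with hAm
  set Amn : W := ((m * n : ℕ) : ℝ)⁻¹ • ∑ j ∈ Finset.Ioc 0 (m * n), b j v with hAmn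
  set Bk : W := (m : ℝ)⁻¹ • ∑ j ∈ Finset.Ioc 0 m, b (j + k) v with hBk
  have h1 : ‖An - Amn‖ ≤ ε / 3 := by
    rw [norm_sub_rev]
    exact claim2avg v n hn m hm1
  have h2 : ‖Amn - Am‖ ≤ ε / 3 := by
    have := claim2avg v m hm n hn1
    rw [show n * m = m * n from Nat.mul_comm n m] at this
    exact this
  have h3 : ‖Am - Bk‖ ≤ ε / 3 := by
    rw [norm_sub_rev]
    exact claim1avg v m hm k hk
  calc ‖An - Bk‖ = ‖(An - Amn) + (Amn - Am) + (Am - Bk)‖ := by abel_nf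
    _ ≤ ‖(An - Amn) + (Amn - Am)‖ + ‖Am - Bk‖ := norm_add_le _ _
    _ ≤ (‖An - Amn‖ + ‖Amn - Am‖) + ‖Am - Bk‖ := by
        have := norm_add_le (An - Amn) (Amn - Am)
        linarith
    _ ≤ ε / 3 + ε / 3 + ε / 3 := by linarith
    _ = ε := by ring
end
end

section
/- The inner angular values satisfy θ_s^{liminf,inf} ≤ θ_s^{limsup,inf}, θ_s^{liminf,inf} ≤ θ_s^{liminf,sup}, θ_s^{limsup,inf} ≤ θ_s^{limsup,sup}, θ_s^{liminf,sup} ≤ θ_s^{limsup,sup}. Moreover, the outer angular spectrum Σ_s^{out} and the four inner angular values are contained in the inner angular spectrum Σ_s^{in}, and Σ_s^{in} ⊆ [θ_s^{liminf,inf}, θ_s^{limsup,sup}]. If in addition θ_s^{liminf,inf} = θ_s^{limsup,inf} and θ_s^{liminf,sup} = θ_s^{limsup,sup}, then Σ_s^{in} = [θ_s^{liminf,inf}, θ_s^{limsup,sup}]. -/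
open scoped RealInnerProductSpace ENNReal
open Filter

noncomputable section

/-- `sup_{V ∈ G(s,d)} α_n(V)`. -/
def innerSup {d : ℕ} (A : ℕ → Euc d ≃L[ℝ] Euc d) (s : ℕ) (n : ℕ) : ℝ :=
  sSup {x : ℝ | ∃ V : Submodule ℝ (Euc d), Module.finrank ℝ V = s ∧
    x = alphaAvg A V n}

/-- `inf_{V ∈ G(s,d)} α_n(V)`. -/
def innerInf {d : ℕ} (A : ℕ → Euc d ≃L[ℝ] Euc d) (s : ℕ) (n : ℕ) : ℝ :=
  sInf {x : ℝ | ∃ V : Submodule ℝ (Euc d), Module.finrank ℝ V = s ∧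
    x = alphaAvg A V n}

/-- The inner angular spectrum
`Σ_s^{in} = cl{θ ∈ [0,π/2] : ∃ (V_n) in G(s,d), liminf α_n(V_n) ≤ θ ≤ limsup α_n(V_n)}`. -/
def angSpecInN {d : ℕ} (A : ℕ → Euc d ≃L[ℝ] Euc d) (s : ℕ) : Set ℝ :=
  closure {θ : ℝ | 0 ≤ θ ∧ θ ≤ Real.pi / 2 ∧
    ∃ Vs : ℕ → Submodule ℝ (Euc d), (∀ n, Module.finrank ℝ (Vs n) = s) ∧
      liminf (fun n => alphaAvg A (Vs n) n) atTop ≤ θ ∧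
      θ ≤ limsup (fun n => alphaAvg A (Vs n) n) atTop}

-- ===== auxiliary lemmas =====

lemma myBddAbove {u : ℕ → ℝ} {c : ℝ} (h : ∀ n, u n ≤ c) :
    IsBoundedUnder (· ≤ ·) atTop u := isBoundedUnder_of ⟨c, h⟩

lemma myBddBelow {u : ℕ → ℝ} {c : ℝ} (h : ∀ n, c ≤ u n) :
    IsBoundedUnder (· ≥ ·) atTop u := isBoundedUnder_of ⟨c, h⟩

lemma my_limsup_le {u v : ℕ → ℝ} {a b : ℝ}
    (hu : ∀ n, u n ∈ Set.Icc a b) (hv : ∀ n, v n ∈ Set.Icc a b)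
    (h : ∀ ε > (0:ℝ), ∀ᶠ n in atTop, u n ≤ v n + ε) :
    limsup u atTop ≤ limsup v atTop := by
  have hbu' := myBddBelow (fun n => (hu n).1)
  have hbv := myBddAbove (fun n => (hv n).2)
  by_contra hlt
  push_neg at hlt
  set ε := (limsup u atTop - limsup v atTop) / 3 with hε
  have hεpos : 0 < ε := by simp only [hε]; linarith
  have h1 : ∀ᶠ n in atTop, v n < limsup v atTop + ε :=
    eventually_lt_of_limsup_lt (by linarith) hbv
  have h3 : ∀ᶠ n in atTop, u n ≤ limsup v atTop + 2 * ε :=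
    (h1.and (h ε hεpos)).mono fun n ⟨p, q⟩ => by linarith
  have := limsup_le_of_le hbu'.isCoboundedUnder_le h3
  simp only [hε] at this; linarith

lemma my_liminf_le {u v : ℕ → ℝ} {a b : ℝ}
    (hu : ∀ n, u n ∈ Set.Icc a b) (hv : ∀ n, v n ∈ Set.Icc a b)
    (h : ∀ ε > (0:ℝ), ∀ᶠ n in atTop, u n ≤ v n + ε) :
    liminf u atTop ≤ liminf v atTop := by
  have hbu := myBddBelow (fun n => (hu n).1)
  have hbv := myBddAbove (fun n => (hv n).2)
  by_contra hlt
  push_neg at hlt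
  set ε := (liminf u atTop - liminf v atTop) / 3 with hε
  have hεpos : 0 < ε := by simp only [hε]; linarith
  have h1 : ∀ᶠ n in atTop, liminf u atTop - ε < u n :=
    eventually_lt_of_lt_liminf (by linarith) hbu
  have h3 : ∀ᶠ n in atTop, liminf u atTop - 2 * ε ≤ v n :=
    (h1.and (h ε hεpos)).mono fun n ⟨p, q⟩ => by linarith
  have := le_liminf_of_le hbv.isCoboundedUnder_ge h3
  simp only [hε] at this; linarith

lemma eps_event : ∀ ε > (0:ℝ), ∀ᶠ n : ℕ in atTop, ((n:ℝ) + 1)⁻¹ < ε := by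
  intro ε hε
  have h : Filter.Tendsto (fun n : ℕ => ((n:ℝ) + 1)⁻¹) atTop (nhds 0) :=
    tendsto_one_div_add_atTop_nhds_zero_nat.congr (by intro n; rw [one_div])
  exact h.eventually (gt_mem_nhds hε)

lemma subAngle_nonneg' {d : ℕ} (V W : Submodule ℝ (Euc d)) : 0 ≤ subAngle V W :=
  Real.arccos_nonneg _

lemma subAngle_le' {d : ℕ} (V W : Submodule ℝ (Euc d)) (hW : W ≠ ⊥) :
    subAngle V W ≤ Real.pi / 2 := by
  obtain ⟨x, hxW, hx⟩ := (Submodule.ne_bot_iff W).mp hW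
  obtain ⟨w₀, hw₀W, hw₀⟩ : ∃ w ∈ W, ‖w‖ = 1 :=
    ⟨‖x‖⁻¹ • x, W.smul_mem _ hxW, by
      rw [norm_smul, norm_inv, norm_norm, inv_mul_cancel₀ (norm_ne_zero_iff.mpr hx)]⟩
  refine Real.arccos_le_pi_div_two.mpr (Real.sInf_nonneg fun z hz => ?_)
  obtain ⟨v, hvV, hv1, rfl⟩ := hz
  have hbdd : BddAbove {y : ℝ | ∃ w ∈ W, ‖w‖ = 1 ∧ y = ⟪v, w⟫} := by
    refine ⟨1, fun y hy => ?_⟩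
    obtain ⟨w, hwW, hw1, rfl⟩ := hy
    calc ⟪v, w⟫ ≤ ‖v‖ * ‖w‖ := real_inner_le_norm v w
    _ = 1 := by rw [hv1, hw1, one_mul]
  rcases le_or_gt 0 ⟪v, w₀⟫ with h | h
  · exact h.trans (le_csSup hbdd ⟨w₀, hw₀W, hw₀, rfl⟩)
  · have h2 : (0:ℝ) ≤ ⟪v, -w₀⟫ := by rw [inner_neg_right]; linarith
    exact h2.trans (le_csSup hbdd ⟨-w₀, W.neg_mem hw₀W, by rw [norm_neg]; exact hw₀, rfl⟩)

lemma finrank_map_clm {d : ℕ} (e : Euc d ≃L[ℝ] Euc d) (V : Submodule ℝ (Euc d)) :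
    Module.finrank ℝ (V.map ((e : Op d) : Euc d →ₗ[ℝ] Euc d)) = Module.finrank ℝ V := by
  have h : V.map ((e : Op d) : Euc d →ₗ[ℝ] Euc d) = V.map (e.toLinearEquiv : Euc d →ₗ[ℝ] Euc d) := rfl
  rw [h, LinearEquiv.finrank_map_eq]

lemma alphaAvg_mem {d s : ℕ} (A : ℕ → Euc d ≃L[ℝ] Euc d) (hs : 1 ≤ s)
    (V : Submodule ℝ (Euc d)) (hV : Module.finrank ℝ V = s) (n : ℕ) :
    alphaAvg A V n ∈ Set.Icc (0:ℝ) (Real.pi / 2) := by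
  constructor
  · exact mul_nonneg (inv_nonneg.mpr (Nat.cast_nonneg n))
      (Finset.sum_nonneg fun j _ => subAngle_nonneg' _ _)
  · rcases Nat.eq_zero_or_pos n with rfl | hn
    · simp only [alphaAvg, Finset.range_zero, Finset.sum_empty, mul_zero]
      positivity
    · have hterm : ∀ j ∈ Finset.range n,
          subAngle (V.map ((PhiN A j : Op d) : Euc d →ₗ[ℝ] Euc d)) (V.map ((PhiN A (j+1) : Op d) : Euc d →ₗ[ℝ] Euc d)) ≤ Real.pi / 2 := by
        intro j _
        refine subAngle_le' _ _ fun hbot => ?_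
        have hr : Module.finrank ℝ (V.map ((PhiN A (j+1) : Op d) : Euc d →ₗ[ℝ] Euc d)) = s :=
          (finrank_map_clm _ _).trans hV
        rw [hbot, finrank_bot] at hr
        omega
      have hsum := Finset.sum_le_card_nsmul (Finset.range n) _ _ hterm
      rw [Finset.card_range, nsmul_eq_mul] at hsum
      have hnne : (n:ℝ) ≠ 0 := Nat.cast_ne_zero.mpr hn.ne'
      calc alphaAvg A V n ≤ (n:ℝ)⁻¹ * ((n:ℝ) * (Real.pi / 2)) :=
            mul_le_mul_of_nonneg_left hsum (by positivity)
        _ = Real.pi / 2 := by field_simp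

/-- ordering of the inner angular values; the outer angular spectrum
and the four inner angular values are contained in the inner angular spectrum;
`Σ_s^{in} ⊆ [θ_s^{liminf,inf}, θ_s^{limsup,sup}]`; and if liminf and limsup
coincide, then `Σ_s^{in}` equals its maximal interval. -/
theorem statement19 {d s : ℕ} (A : ℕ → Euc d ≃L[ℝ] Euc d)
    (hbd : ∃ M : ℝ, ∀ n : ℕ, ‖(A n : Op d)‖ ≤ M ∧ ‖((A n).symm : Op d)‖ ≤ M)
    (hs : 1 ≤ s) (hsd : s ≤ d) :
    liminf (innerInf A s) atTop ≤ limsup (innerInf A s) atTop ∧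
    liminf (innerInf A s) atTop ≤ liminf (innerSup A s) atTop ∧
    limsup (innerInf A s) atTop ≤ limsup (innerSup A s) atTop ∧
    liminf (innerSup A s) atTop ≤ limsup (innerSup A s) atTop ∧
    angSpecN A s ⊆ angSpecInN A s ∧
    ({liminf (innerInf A s) atTop, limsup (innerInf A s) atTop,
      liminf (innerSup A s) atTop, limsup (innerSup A s) atTop} : Set ℝ)
        ⊆ angSpecInN A s ∧
    angSpecInN A s ⊆
      Set.Icc (liminf (innerInf A s) atTop) (limsup (innerSup A s) atTop) ∧
    (liminf (innerInf A s) atTop = limsup (innerInf A s) atTop →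
      liminf (innerSup A s) atTop = limsup (innerSup A s) atTop →
      angSpecInN A s =
        Set.Icc (liminf (innerInf A s) atTop) (limsup (innerSup A s) atTop)) := by
  classical
  -- an s-dimensional subspace exists
  obtain ⟨V₀, hV₀⟩ : ∃ V : Submodule ℝ (Euc d), Module.finrank ℝ V = s := by
    let b := (EuclideanSpace.basisFun (Fin d) ℝ).toBasis
    refine ⟨Submodule.span ℝ (Set.range (b ∘ Fin.castLE hsd)), ?_⟩
    rw [finrank_span_eq_card (b.linearIndependent.comp _ (Fin.castLE_injective hsd))]
    simp
  set Icc2 : Set ℝ := Set.Icc (0:ℝ) (Real.pi / 2) with hIcc2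
  set S : ℕ → Set ℝ := fun n => {x : ℝ | ∃ V : Submodule ℝ (Euc d),
    Module.finrank ℝ V = s ∧ x = alphaAvg A V n} with hSdef
  have hSne : ∀ n, (S n).Nonempty := fun n => ⟨_, V₀, hV₀, rfl⟩
  have hSsub : ∀ n, S n ⊆ Icc2 := by
    rintro n x ⟨V, hV, rfl⟩; exact alphaAvg_mem A hs V hV n
  have hSbddA : ∀ n, BddAbove (S n) := fun n => ⟨_, fun x hx => (hSsub n hx).2⟩
  have hSbddB : ∀ n, BddBelow (S n) := fun n => ⟨_, fun x hx => (hSsub n hx).1⟩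
  have hII : ∀ n, innerInf A s n = sInf (S n) := fun _ => rfl
  have hIS : ∀ n, innerSup A s n = sSup (S n) := fun _ => rfl
  have hIleA : ∀ (V : Submodule ℝ (Euc d)), Module.finrank ℝ V = s →
      ∀ n, innerInf A s n ≤ alphaAvg A V n := fun V hV n =>
    csInf_le (hSbddB n) ⟨V, hV, rfl⟩
  have hAleS : ∀ (V : Submodule ℝ (Euc d)), Module.finrank ℝ V = s →
      ∀ n, alphaAvg A V n ≤ innerSup A s n := fun V hV n =>
    le_csSup (hSbddA n) ⟨V, hV, rfl⟩
  have hImem : ∀ n, innerInf A s n ∈ Icc2 := fun n =>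
    ⟨le_csInf (hSne n) fun x hx => (hSsub n hx).1,
     (hIleA V₀ hV₀ n).trans (alphaAvg_mem A hs V₀ hV₀ n).2⟩
  have hSmem : ∀ n, innerSup A s n ∈ Icc2 := fun n =>
    ⟨(alphaAvg_mem A hs V₀ hV₀ n).1.trans (hAleS V₀ hV₀ n),
     csSup_le (hSne n) fun x hx => (hSsub n hx).2⟩
  -- bounds on liminf/limsup of sequences valued in Icc2
  have hvals : ∀ u : ℕ → ℝ, (∀ n, u n ∈ Icc2) →
      liminf u atTop ∈ Icc2 ∧ limsup u atTop ∈ Icc2 := by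
    intro u hu
    have hba := myBddAbove (fun n => (hu n).2)
    have hbb := myBddBelow (fun n => (hu n).1)
    refine ⟨⟨le_liminf_of_le hba.isCoboundedUnder_ge
        (Eventually.of_forall fun n => (hu n).1),
      liminf_le_of_frequently_le
        ((Eventually.of_forall fun n => (hu n).2).frequently) hbb⟩,
      ⟨le_limsup_of_frequently_le
        ((Eventually.of_forall fun n => (hu n).1).frequently) hba,
      limsup_le_of_le hbb.isCoboundedUnder_le
        (Eventually.of_forall fun n => (hu n).2)⟩⟩
  -- pointwise ≤ gives liminf/limsup comparison (with ε slack trick)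
  have hptE : ∀ (u v : ℕ → ℝ), (∀ n, u n ≤ v n) →
      ∀ ε > (0:ℝ), ∀ᶠ n in atTop, u n ≤ v n + ε := fun u v h ε hε =>
    Eventually.of_forall fun n => (h n).trans (le_add_of_nonneg_right hε.le)
  -- approximating sequences
  have hVInfEx : ∀ n, ∃ V : Submodule ℝ (Euc d), Module.finrank ℝ V = s ∧
      alphaAvg A V n < innerInf A s n + ((n:ℝ) + 1)⁻¹ := by
    intro n
    have hpos : (0:ℝ) < ((n:ℝ) + 1)⁻¹ := by positivity
    obtain ⟨x, hxS, hxlt⟩ := exists_lt_of_csInf_lt (hSne n) (lt_add_of_pos_right _ hpos)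
    obtain ⟨V, hV, rfl⟩ := hxS
    exact ⟨V, hV, hxlt⟩
  choose VInf hVInfrk hVInflt using hVInfEx
  have hVSupEx : ∀ n, ∃ V : Submodule ℝ (Euc d), Module.finrank ℝ V = s ∧
      innerSup A s n < alphaAvg A V n + ((n:ℝ) + 1)⁻¹ := by
    intro n
    have hpos : (0:ℝ) < ((n:ℝ) + 1)⁻¹ := by positivity
    obtain ⟨x, hxS, hxlt⟩ := exists_lt_of_lt_csSup (hSne n) (sub_lt_self _ hpos)
    obtain ⟨V, hV, rfl⟩ := hxS
    have h' : innerSup A s n - ((n:ℝ) + 1)⁻¹ < alphaAvg A V n := hxlt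
    exact ⟨V, hV, by linarith⟩
  choose VSup hVSuprk hVSuplt using hVSupEx
  set aInf : ℕ → ℝ := fun n => alphaAvg A (VInf n) n with haInfdef
  set aSup : ℕ → ℝ := fun n => alphaAvg A (VSup n) n with haSupdef
  have haInfmem : ∀ n, aInf n ∈ Icc2 := fun n => alphaAvg_mem A hs _ (hVInfrk n) n
  have haSupmem : ∀ n, aSup n ∈ Icc2 := fun n => alphaAvg_mem A hs _ (hVSuprk n) n
  have haInflb : ∀ n, innerInf A s n ≤ aInf n := fun n => hIleA _ (hVInfrk n) n
  have haSupub : ∀ n, aSup n ≤ innerSup A s n := fun n => hAleS _ (hVSuprk n) n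
  have hepsInf : ∀ ε > (0:ℝ), ∀ᶠ n in atTop, aInf n ≤ innerInf A s n + ε :=
    fun ε hε => (eps_event ε hε).mono fun n h => by
      have := hVInflt n; linarith
  have hepsSup : ∀ ε > (0:ℝ), ∀ᶠ n in atTop, innerSup A s n ≤ aSup n + ε :=
    fun ε hε => (eps_event ε hε).mono fun n h => by
      have := hVSuplt n; linarith
  -- key comparisons
  have hlsInf : limsup aInf atTop ≤ limsup (innerInf A s) atTop :=
    my_limsup_le haInfmem hImem hepsInf
  have hliInf : liminf aInf atTop ≤ liminf (innerInf A s) atTop :=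
    my_liminf_le haInfmem hImem hepsInf
  have hlsInf' : limsup (innerInf A s) atTop ≤ limsup aInf atTop :=
    my_limsup_le hImem haInfmem (hptE _ _ haInflb)
  have hliInf' : liminf (innerInf A s) atTop ≤ liminf aInf atTop :=
    my_liminf_le hImem haInfmem (hptE _ _ haInflb)
  have hlsSup : limsup (innerSup A s) atTop ≤ limsup aSup atTop :=
    my_limsup_le hSmem haSupmem hepsSup
  have hliSup : liminf (innerSup A s) atTop ≤ liminf aSup atTop :=
    my_liminf_le hSmem haSupmem hepsSup
  have hlsSup' : limsup aSup atTop ≤ limsup (innerSup A s) atTop :=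
    my_limsup_le haSupmem hSmem (hptE _ _ haSupub)
  have hliSup' : liminf aSup atTop ≤ liminf (innerSup A s) atTop :=
    my_liminf_le haSupmem hSmem (hptE _ _ haSupub)
  have hII_IS_li : liminf (innerInf A s) atTop ≤ liminf (innerSup A s) atTop :=
    my_liminf_le hImem hSmem (hptE _ _ fun n =>
      (hIleA V₀ hV₀ n).trans (hAleS V₀ hV₀ n))
  have hII_IS_ls : limsup (innerInf A s) atTop ≤ limsup (innerSup A s) atTop :=
    my_limsup_le hImem hSmem (hptE _ _ fun n =>
      (hIleA V₀ hV₀ n).trans (hAleS V₀ hV₀ n))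
  have hlils : ∀ u : ℕ → ℝ, (∀ n, u n ∈ Icc2) → liminf u atTop ≤ limsup u atTop :=
    fun u hu => liminf_le_limsup (myBddAbove fun n => (hu n).2)
      (myBddBelow fun n => (hu n).1)
  -- first four conjuncts
  refine ⟨hlils _ hImem, hII_IS_li, hII_IS_ls, hlils _ hSmem, ?_, ?_, ?_, ?_⟩
  · -- angSpecN ⊆ angSpecInN
    apply closure_mono
    rintro θ ⟨h0, hpi, V, hV, hl, hu⟩
    exact ⟨h0, hpi, fun _ => V, fun _ => hV, hl, hu⟩
  · -- four values in angSpecInN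
    intro θ hθ
    have hIccA := hvals (innerInf A s) hImem
    have hIccS := hvals (innerSup A s) hSmem
    simp only [Set.mem_insert_iff, Set.mem_singleton_iff] at hθ
    rcases hθ with rfl | rfl | rfl | rfl
    · exact subset_closure ⟨hIccA.1.1, hIccA.1.2, VInf, hVInfrk, hliInf,
        hliInf'.trans (hlils _ haInfmem)⟩
    · exact subset_closure ⟨hIccA.2.1, hIccA.2.2, VInf, hVInfrk,
        hliInf.trans (hlils _ hImem), hlsInf'⟩
    · exact subset_closure ⟨hIccS.1.1, hIccS.1.2, VSup, hVSuprk, hliSup',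
        (hlils _ hSmem).trans hlsSup⟩
    · exact subset_closure ⟨hIccS.2.1, hIccS.2.2, VSup, hVSuprk,
        hliSup'.trans (hlils _ hSmem), hlsSup⟩
  · -- angSpecInN ⊆ Icc
    have hclosed : IsClosed (Set.Icc (liminf (innerInf A s) atTop)
        (limsup (innerSup A s) atTop)) := isClosed_Icc
    refine closure_minimal ?_ hclosed
    rintro θ ⟨h0, hpi, Vs, hrk, hl, hu⟩
    have hmemV : ∀ n, alphaAvg A (Vs n) n ∈ Icc2 := fun n =>
      alphaAvg_mem A hs _ (hrk n) n
    constructor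
    · exact (my_liminf_le hImem hmemV (hptE _ _ fun n => hIleA _ (hrk n) n)).trans hl
    · exact hu.trans (my_limsup_le hmemV hSmem (hptE _ _ fun n => hAleS _ (hrk n) n))
  · -- equality case
    intro h1 h2
    set a := liminf (innerInf A s) atTop with ha
    set b := limsup (innerSup A s) atTop with hb
    apply Set.Subset.antisymm
    · -- same as part 7
      refine closure_minimal ?_ isClosed_Icc
      rintro θ ⟨h0, hpi, Vs, hrk, hl, hu⟩
      have hmemV : ∀ n, alphaAvg A (Vs n) n ∈ Icc2 := fun n =>
        alphaAvg_mem A hs _ (hrk n) n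
      exact ⟨(my_liminf_le hImem hmemV (hptE _ _ fun n => hIleA _ (hrk n) n)).trans hl,
        hu.trans (my_limsup_le hmemV hSmem (hptE _ _ fun n => hAleS _ (hrk n) n))⟩
    · -- Icc a b ⊆ angSpecInN
      have hIccA := hvals (innerInf A s) hImem
      have hIccS := hvals (innerSup A s) hSmem
      have h0 : Tendsto (fun n : ℕ => ((n:ℝ) + 1)⁻¹) atTop (nhds 0) :=
        tendsto_one_div_add_atTop_nhds_zero_nat.congr (by intro n; rw [one_div])
      have hTI : Tendsto (innerInf A s) atTop (nhds a) :=
        tendsto_of_liminf_eq_limsup rfl h1.symm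
          (myBddAbove fun n => (hImem n).2) (myBddBelow fun n => (hImem n).1)
      have hTS : Tendsto (innerSup A s) atTop (nhds b) :=
        tendsto_of_liminf_eq_limsup h2 rfl
          (myBddAbove fun n => (hSmem n).2) (myBddBelow fun n => (hSmem n).1)
      have hTaInf : Tendsto aInf atTop (nhds a) := by
        have hup : Tendsto (fun n => innerInf A s n + ((n:ℝ) + 1)⁻¹) atTop (nhds a) := by
          simpa using hTI.add h0
        exact tendsto_of_tendsto_of_tendsto_of_le_of_le hTI hup haInflb
          (fun n => (hVInflt n).le)
      have hTaSup : Tendsto aSup atTop (nhds b) := by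
        have hlo : Tendsto (fun n => innerSup A s n - ((n:ℝ) + 1)⁻¹) atTop (nhds b) := by
          simpa using hTS.sub h0
        exact tendsto_of_tendsto_of_tendsto_of_le_of_le hlo hTS
          (fun n => by have := hVSuplt n; linarith) haSupub
      set Vs : ℕ → Submodule ℝ (Euc d) := fun n => if Even n then VInf n else VSup n
        with hVsdef
      have hrk : ∀ n, Module.finrank ℝ (Vs n) = s := by
        intro n
        by_cases he : Even n
        · have hq : Vs n = VInf n := if_pos he
          rw [hq]; exact hVInfrk n
        · have hq : Vs n = VSup n := if_neg he
          rw [hq]; exact hVSuprk n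
      have hval : ∀ n, alphaAvg A (Vs n) n = if Even n then aInf n else aSup n := by
        intro n
        by_cases he : Even n
        · have hq : Vs n = VInf n := if_pos he
          rw [hq, if_pos he]
        · have hq : Vs n = VSup n := if_neg he
          rw [hq, if_neg he]
      set αVs : ℕ → ℝ := fun n => alphaAvg A (Vs n) n with hαdef
      have hαmem : ∀ n, αVs n ∈ Icc2 := fun n => alphaAvg_mem A hs _ (hrk n) n
      have hliVs : liminf αVs atTop ≤ a := by
        refine le_of_forall_pos_le_add fun ε hε => ?_
        have hev : ∀ᶠ n in atTop, aInf n < a + ε :=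
          hTaInf.eventually_lt_const (by linarith)
        have hfreq : ∃ᶠ n in atTop, αVs n ≤ a + ε := by
          refine (Nat.frequently_even.and_eventually hev).mono fun n ⟨he, hlt⟩ => ?_
          show alphaAvg A (Vs n) n ≤ a + ε
          rw [hval n, if_pos he]; exact hlt.le
        exact liminf_le_of_frequently_le hfreq (myBddBelow fun n => (hαmem n).1)
      have hlsVs : b ≤ limsup αVs atTop := by
        refine le_of_forall_pos_le_add fun ε hε => ?_
        have hev : ∀ᶠ n in atTop, b - ε < aSup n :=
          hTaSup.eventually_const_lt (by linarith)
        have hfreq : ∃ᶠ n in atTop, b - ε ≤ αVs n := by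
          refine (Nat.frequently_odd.and_eventually hev).mono fun n ⟨ho, hlt⟩ => ?_
          show b - ε ≤ alphaAvg A (Vs n) n
          rw [hval n, if_neg (Nat.not_even_iff_odd.mpr ho)]
          exact hlt.le
        have := le_limsup_of_frequently_le hfreq (myBddAbove fun n => (hαmem n).2)
        linarith
      rintro θ ⟨hθ1, hθ2⟩
      exact subset_closure ⟨hIccA.1.1.trans hθ1, hθ2.trans hIccS.2.2, Vs, hrk,
        hliVs.trans hθ1, hθ2.trans hlsVs⟩
end
end
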